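/- arXiv:2312.02960 — 4 statements merged into one kernel-verified Lean document; each statement's English description precedes it below -/
import Mathlib

section
/- For every integer M ≥ 1 and all pairwise distinct complex numbers z_1, …, z_{2M}, the square of the signed sum over pair partitions equals the unsigned sum of squares: ( Σ_{p ∈ P_M} (−1)^{c(p)} Π_{i=1}^{M} (z_{a_i(p)} − z_{b_i(p)})^{−1} )² = Σ_{p ∈ P_M} Π_{i=1}^{M} (z_{a_i(p)} − z_{b_i(p)})^{−2}. -/
open scoped BigOperators

attribute [local instance] Classical.propDecidable

/-- `p` is a perfect matching (pair partition) of `Fin (2*M)`: the pairs are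
recorded as ordered pairs `(a, b)` with `a < b`, and every element of
`Fin (2*M)` belongs to exactly one pair. -/
def IsPerfectMatching (M : ℕ) (p : Finset (Fin (2*M) × Fin (2*M))) : Prop :=
  (∀ e ∈ p, e.1 < e.2) ∧ ∀ i : Fin (2*M), ∃! e, e ∈ p ∧ (i = e.1 ∨ i = e.2)

/-- The crossing number of a matching: the number of (ordered) pairs of pairs
`(a_i, b_i)`, `(a_j, b_j)` with `a_i < a_j < b_i < b_j`. -/
noncomputable def crossingNumber (M : ℕ) (p : Finset (Fin (2*M) × Fin (2*M))) : ℕ :=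
  ((p ×ˢ p).filter (fun q => q.1.1 < q.2.1 ∧ q.2.1 < q.1.2 ∧ q.1.2 < q.2.2)).card

namespace PfSq

noncomputable section
open Finset Polynomial

/-- indicator that ordered pair e crosses f in the orientation e.1 < f.1 < e.2 < f.2 -/
def xi (e f : ℕ × ℕ) : ℕ := if e.1 < f.1 ∧ f.1 < e.2 ∧ e.2 < f.2 then 1 else 0

def chi (e f : ℕ × ℕ) : ℕ := xi e f + xi f e

def cross (p : Finset (ℕ × ℕ)) : ℕ := ∑ e ∈ p, ∑ f ∈ p, xi e f

def PM (V : Finset ℕ) (p : Finset (ℕ × ℕ)) : Prop :=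
  (∀ e ∈ p, e.1 < e.2 ∧ e.1 ∈ V ∧ e.2 ∈ V) ∧
    ∀ i ∈ V, ∃! e, e ∈ p ∧ (i = e.1 ∨ i = e.2)

def MS (V : Finset ℕ) : Finset (Finset (ℕ × ℕ)) := ((V ×ˢ V).powerset).filter (PM V)

lemma mem_MS {V : Finset ℕ} {p : Finset (ℕ × ℕ)} : p ∈ MS V ↔ PM V p := by
  constructor
  · intro h; exact (Finset.mem_filter.1 h).2
  · intro h
    refine Finset.mem_filter.2 ⟨Finset.mem_powerset.2 ?_, h⟩
    intro e he
    rcases h.1 e he with ⟨_, h1, h2⟩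
    exact Finset.mem_product.2 ⟨h1, h2⟩

lemma xi_self (e : ℕ × ℕ) : xi e e = 0 := by
  simp [xi]

lemma cross_insert {e : ℕ × ℕ} {p : Finset (ℕ × ℕ)} (he : e ∉ p) :
    cross (insert e p) = cross p + ∑ f ∈ p, chi e f := by
  unfold cross
  rw [Finset.sum_insert he, Finset.sum_insert he, xi_self]
  have : ∀ f ∈ p, (∑ g ∈ insert e p, xi f g) = xi f e + ∑ g ∈ p, xi f g := by
    intro f hf; rw [Finset.sum_insert he]
  rw [Finset.sum_congr rfl this, Finset.sum_add_distrib]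
  simp [chi, Finset.sum_add_distrib]
  ring

end
end PfSq
namespace PfSq
noncomputable section
open Finset Polynomial

def pmate (p : Finset (ℕ × ℕ)) (i : ℕ) : ℕ × ℕ :=
  if h : ∃! e, e ∈ p ∧ (i = e.1 ∨ i = e.2) then
    Finset.choose (fun e => i = e.1 ∨ i = e.2) p h else (0,0)

def partner (p : Finset (ℕ × ℕ)) (i : ℕ) : ℕ :=
  if i = (pmate p i).1 then (pmate p i).2 else (pmate p i).1

lemma pmate_mem {V : Finset ℕ} {p : Finset (ℕ × ℕ)} (hp : PM V p) {i : ℕ}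
    (hi : i ∈ V) : pmate p i ∈ p := by
  rw [pmate, dif_pos (hp.2 i hi)]
  exact Finset.choose_mem _ _ _

lemma pmate_spec {V : Finset ℕ} {p : Finset (ℕ × ℕ)} (hp : PM V p) {i : ℕ}
    (hi : i ∈ V) : i = (pmate p i).1 ∨ i = (pmate p i).2 := by
  rw [pmate, dif_pos (hp.2 i hi)]
  exact Finset.choose_property (fun e => i = e.1 ∨ i = e.2) p (hp.2 i hi)

lemma pmate_eq {V : Finset ℕ} {p : Finset (ℕ × ℕ)} (hp : PM V p) {i : ℕ}
    (hi : i ∈ V) {e : ℕ × ℕ} (he : e ∈ p)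
    (hie : i = e.1 ∨ i = e.2) : pmate p i = e := by
  have h := hp.2 i hi
  exact h.unique ⟨pmate_mem hp hi, pmate_spec hp hi⟩ ⟨he, hie⟩

lemma pmate_min {V : Finset ℕ} {p : Finset (ℕ × ℕ)} (hV : V.Nonempty)
    (hp : PM V p) : pmate p (V.min' hV) = (V.min' hV, partner p (V.min' hV)) := by
  set v0 := V.min' hV with hv0
  have hv0m : v0 ∈ V := V.min'_mem hV
  have hmem := pmate_mem hp hv0m
  have hspec := pmate_spec hp hv0m
  have hlt := (hp.1 _ hmem).1
  have h1 : (pmate p v0).1 ∈ V := (hp.1 _ hmem).2.1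
  have hfst : v0 = (pmate p v0).1 := by
    rcases hspec with h | h
    · exact h
    · exfalso
      have := V.min'_le _ h1
      omega
  rw [partner, if_pos hfst]
  exact Prod.ext hfst.symm rfl

lemma partner_min_mem {V : Finset ℕ} {p : Finset (ℕ × ℕ)} (hV : V.Nonempty)
    (hp : PM V p) : partner p (V.min' hV) ∈ V.erase (V.min' hV) := by
  set v0 := V.min' hV with hv0
  have hv0m : v0 ∈ V := V.min'_mem hV
  have hmem := pmate_mem hp hv0m
  rw [pmate_min hV hp] at hmem
  have h2 := (hp.1 _ hmem).2.2
  have hlt := (hp.1 _ hmem).1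
  exact Finset.mem_erase.2 ⟨by simpa using hlt.ne', h2⟩

lemma pair_min_mem {V : Finset ℕ} {p : Finset (ℕ × ℕ)} (hV : V.Nonempty)
    (hp : PM V p) : (V.min' hV, partner p (V.min' hV)) ∈ p := by
  have := pmate_mem hp (V.min'_mem hV)
  rwa [pmate_min hV hp] at this

/-- erasing a pair from a perfect matching -/
lemma PM_erase {V : Finset ℕ} {p : Finset (ℕ × ℕ)} (hp : PM V p) {a b : ℕ}
    (hab : (a,b) ∈ p) : PM ((V.erase a).erase b) (p.erase (a,b)) := by
  obtain ⟨hab1, haV, hbV⟩ := hp.1 _ hab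
  constructor
  · intro e he
    have hep := Finset.mem_of_mem_erase he
    have hne := Finset.ne_of_mem_erase he
    obtain ⟨he1, he2, he3⟩ := hp.1 e hep
    refine ⟨he1, ?_, ?_⟩
    · refine Finset.mem_erase.2 ⟨?_, Finset.mem_erase.2 ⟨?_, he2⟩⟩
      · intro hh
        exact hne ((hp.2 e.1 he2).unique ⟨hep, Or.inl rfl⟩ ⟨hab, Or.inr hh⟩)
      · intro hh
        exact hne ((hp.2 e.1 he2).unique ⟨hep, Or.inl rfl⟩ ⟨hab, Or.inl hh⟩)
    · refine Finset.mem_erase.2 ⟨?_, Finset.mem_erase.2 ⟨?_, he3⟩⟩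
      · intro hh
        exact hne ((hp.2 e.2 he3).unique ⟨hep, Or.inr rfl⟩ ⟨hab, Or.inr hh⟩)
      · intro hh
        exact hne ((hp.2 e.2 he3).unique ⟨hep, Or.inr rfl⟩ ⟨hab, Or.inl hh⟩)
  · intro i hi
    have hib := Finset.ne_of_mem_erase hi
    have hia := Finset.ne_of_mem_erase (Finset.mem_of_mem_erase hi)
    have hiV : i ∈ V := Finset.mem_of_mem_erase (Finset.mem_of_mem_erase hi)
    obtain ⟨e, ⟨hep, hie⟩, hu⟩ := hp.2 i hiV
    refine ⟨e, ⟨Finset.mem_erase.2 ⟨?_, hep⟩, hie⟩, ?_⟩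
    · rintro rfl
      rcases hie with h | h
      · exact hia h
      · exact hib h
    · rintro f ⟨hf, hif⟩
      exact hu f ⟨Finset.mem_of_mem_erase hf, hif⟩

/-- inserting a fresh pair into a perfect matching -/
lemma PM_insert {W : Finset ℕ} {q : Finset (ℕ × ℕ)} (hq : PM W q) {a b : ℕ}
    (hab : a < b) (haW : a ∉ W) (hbW : b ∉ W) :
    PM (insert a (insert b W)) (insert (a,b) q) := by
  constructor
  · rintro e he
    rcases Finset.mem_insert.1 he with rfl | he
    · exact ⟨hab, by simp, by simp⟩
    · obtain ⟨h1, h2, h3⟩ := hq.1 e he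
      exact ⟨h1, by simp [h2], by simp [h3]⟩
  · intro i hi
    have hqa : ∀ f ∈ q, ¬(a = f.1 ∨ a = f.2) := by
      intro f hf h
      obtain ⟨_, h2, h3⟩ := hq.1 f hf
      rcases h with h | h
      · exact haW (h ▸ h2)
      · exact haW (h ▸ h3)
    have hqb : ∀ f ∈ q, ¬(b = f.1 ∨ b = f.2) := by
      intro f hf h
      obtain ⟨_, h2, h3⟩ := hq.1 f hf
      rcases h with h | h
      · exact hbW (h ▸ h2)
      · exact hbW (h ▸ h3)
    rcases Finset.mem_insert.1 hi with h | hi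
    · refine ⟨(a,b), ⟨Finset.mem_insert_self _ _, Or.inl h⟩, ?_⟩
      rintro f ⟨hf, hif⟩
      rcases Finset.mem_insert.1 hf with h2 | hf
      · exact h2
      · rw [h] at hif
        exact absurd hif (hqa f hf)
    rcases Finset.mem_insert.1 hi with h | hi
    · refine ⟨(a,b), ⟨Finset.mem_insert_self _ _, Or.inr h⟩, ?_⟩
      rintro f ⟨hf, hif⟩
      rcases Finset.mem_insert.1 hf with h2 | hf
      · exact h2
      · rw [h] at hif
        exact absurd hif (hqb f hf)
    · obtain ⟨e, ⟨hep, hie⟩, hu⟩ := hq.2 i hi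
      have hiW : i ∈ W := hi
      refine ⟨e, ⟨Finset.mem_insert_of_mem hep, hie⟩, ?_⟩
      rintro f ⟨hf, hif⟩
      rcases Finset.mem_insert.1 hf with h | hf
      · exfalso
        subst h
        simp only [] at hif
        rcases hif with h | h
        · rw [h] at hiW; exact haW hiW
        · rw [h] at hiW; exact hbW hiW
      · exact hu f ⟨hf, hif⟩

end
end PfSq
namespace PfSq
noncomputable section
open Finset Polynomial

lemma min_lt_of_mem_erase {V : Finset ℕ} (hV : V.Nonempty) {k : ℕ}
    (hk : k ∈ V.erase (V.min' hV)) : V.min' hV < k := by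
  have h1 := Finset.mem_of_mem_erase hk
  have h2 := Finset.ne_of_mem_erase hk
  have := V.min'_le _ h1
  omega

lemma pair_not_mem {W : Finset ℕ} {q : Finset (ℕ × ℕ)} (hq : PM W q) {a b : ℕ}
    (ha : a ∉ W) : (a, b) ∉ q := by
  intro h
  exact ha (hq.1 _ h).2.1

lemma PM_insert_min {V : Finset ℕ} (hV : V.Nonempty) {k : ℕ}
    (hk : k ∈ V.erase (V.min' hV)) {q : Finset (ℕ × ℕ)}
    (hq : PM ((V.erase (V.min' hV)).erase k) q) :
    PM V (insert (V.min' hV, k) q) := by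
  have h := PM_insert hq (min_lt_of_mem_erase hV hk)
    (fun hc => (Finset.notMem_erase _ _) (Finset.mem_of_mem_erase hc))
    (Finset.notMem_erase _ _)
  rwa [Finset.insert_erase hk, Finset.insert_erase (V.min'_mem hV)] at h

lemma partner_insert_min {V : Finset ℕ} (hV : V.Nonempty) {k : ℕ}
    (hk : k ∈ V.erase (V.min' hV)) {q : Finset (ℕ × ℕ)}
    (hq : PM ((V.erase (V.min' hV)).erase k) q) :
    partner (insert (V.min' hV, k) q) (V.min' hV) = k := by
  have hp := PM_insert_min hV hk hq
  have h1 := pmate_min hV hp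
  have h2 := pmate_eq hp (V.min'_mem hV) (Finset.mem_insert_self _ _) (Or.inl rfl)
  rw [h1] at h2
  exact (congrArg Prod.snd h2)

lemma sum_MS_partition {V : Finset ℕ} (hV : V.Nonempty) (F : ℕ → Finset (ℕ × ℕ) → ℂ) :
    ∑ p ∈ MS V, F (partner p (V.min' hV)) p
      = ∑ k ∈ V.erase (V.min' hV), ∑ q ∈ MS ((V.erase (V.min' hV)).erase k),
          F k (insert (V.min' hV, k) q) := by
  classical
  set v0 := V.min' hV with hv0
  rw [← Finset.sum_sigma ((V.erase v0)) (fun k => MS ((V.erase v0).erase k))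
    (fun x => F x.1 (insert (v0, x.1) x.2))]
  refine Finset.sum_nbij' (fun p => ⟨partner p v0, p.erase (v0, partner p v0)⟩)
    (fun x => insert (v0, x.1) x.2) ?_ ?_ ?_ ?_ ?_
  · intro p hp
    have hpm := mem_MS.1 hp
    refine Finset.mem_sigma.2 ⟨partner_min_mem hV hpm, mem_MS.2 ?_⟩
    exact PM_erase hpm (pair_min_mem hV hpm)
  · rintro ⟨k, q⟩ hx
    obtain ⟨hk, hq⟩ := Finset.mem_sigma.1 hx
    exact mem_MS.2 (PM_insert_min hV hk (mem_MS.1 hq))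
  · intro p hp
    exact Finset.insert_erase (pair_min_mem hV (mem_MS.1 hp))
  · rintro ⟨k, q⟩ hx
    obtain ⟨hk, hq⟩ := Finset.mem_sigma.1 hx
    have hq' := mem_MS.1 hq
    have h1 := partner_insert_min hV hk hq'
    refine Sigma.ext h1 ?_
    simp only [h1]
    rw [show partner (insert (v0, k) q) v0 = k from h1]
    apply heq_of_eq
    rw [Finset.erase_insert]
    · intro hc
      exact (Finset.notMem_erase v0 V) (Finset.mem_of_mem_erase ((hq'.1 _ hc).2.1))
  · intro p hp
    simp only []
    rw [Finset.insert_erase (pair_min_mem hV (mem_MS.1 hp))]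

end
end PfSq
namespace PfSq
noncomputable section
open Finset Polynomial

def phi (f : ℕ × ℕ) (x : ℕ) : ℕ := if f.1 < x ∧ x < f.2 then 1 else 0

lemma chi_mod (e f : ℕ × ℕ) (he : e.1 < e.2) (hf : f.1 < f.2)
    (h1 : e.1 ≠ f.1) (h2 : e.1 ≠ f.2) (h3 : e.2 ≠ f.1) (h4 : e.2 ≠ f.2) :
    chi e f % 2 = (phi f e.1 + phi f e.2) % 2 := by
  unfold chi xi phi
  split_ifs <;> omega

lemma phi_minmax (f : ℕ × ℕ) (x y : ℕ) :
    phi f (min x y) + phi f (max x y) = phi f x + phi f y := by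
  rcases le_total x y with h | h
  · rw [min_eq_left h, max_eq_right h]
  · rw [min_eq_right h, max_eq_left h, Nat.add_comm]

/-- double counting: the size of a subset of the ground set equals the sum over
pairs of the number of endpoints in the subset. -/
lemma card_eq_sum_pairs {W : Finset ℕ} {q : Finset (ℕ × ℕ)} (hq : PM W q)
    (s : Finset ℕ) (hs : s ⊆ W) :
    s.card = ∑ f ∈ q, ((if f.1 ∈ s then 1 else 0) + (if f.2 ∈ s then 1 else 0)) := by
  classical
  have hstep : s.card = ∑ x ∈ s, ∑ f ∈ q, (if x = f.1 ∨ x = f.2 then 1 else 0) := by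
    have : ∀ x ∈ s, (∑ f ∈ q, (if x = f.1 ∨ x = f.2 then (1:ℕ) else 0)) = 1 := by
      intro x hx
      rw [← Finset.card_filter]
      have hfil : q.filter (fun f => x = f.1 ∨ x = f.2) = {pmate q x} := by
        ext f
        simp only [Finset.mem_filter, Finset.mem_singleton]
        constructor
        · rintro ⟨hf, hP⟩
          exact (pmate_eq hq (hs hx) hf hP).symm
        · rintro rfl
          exact ⟨pmate_mem hq (hs hx), pmate_spec hq (hs hx)⟩
      rw [hfil, Finset.card_singleton]
    rw [Finset.sum_congr rfl this, Finset.sum_const, Nat.smul_one_eq_cast, Nat.cast_id]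
  rw [hstep, Finset.sum_comm]
  refine Finset.sum_congr rfl ?_
  intro f hf
  have hne : f.1 ≠ f.2 := (hq.1 f hf).1.ne
  have hpt : ∀ x, (if x = f.1 ∨ x = f.2 then (1:ℕ) else 0)
      = (if x = f.1 then 1 else 0) + (if x = f.2 then 1 else 0) := by
    intro x
    by_cases h1 : x = f.1 <;> by_cases h2 : x = f.2
    · exact absurd (h1.symm.trans h2) hne
    · simp only [h1, h2]
      simp [hne]
    · simp only [h1, h2]
      simp [Ne.symm hne]
    · simp [h1, h2]
  rw [Finset.sum_congr rfl (fun x _ => hpt x), Finset.sum_add_distrib,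
    Finset.sum_ite_eq' s f.1 (fun _ => (1:ℕ)), Finset.sum_ite_eq' s f.2 (fun _ => (1:ℕ))]

def sgn (p : Finset (ℕ × ℕ)) : ℂ := (-1) ^ (cross p)

lemma neg_one_pow_mod {n m : ℕ} (h : n % 2 = m % 2) : ((-1 : ℂ)) ^ n = (-1) ^ m := by
  conv_lhs => rw [← Nat.div_add_mod n 2]
  conv_rhs => rw [← Nat.div_add_mod m 2]
  rw [pow_add, pow_add, pow_mul, pow_mul]
  simp [h]

/-- inserting the minimal pair (v0,k): the sign change depends only on k. -/
lemma sgn_insert_min {V : Finset ℕ} (hV : V.Nonempty) {k : ℕ}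
    (hk : k ∈ V.erase (V.min' hV)) {q : Finset (ℕ × ℕ)}
    (hq : PM ((V.erase (V.min' hV)).erase k) q) :
    sgn (insert (V.min' hV, k) q)
      = (-1) ^ ((((V.erase (V.min' hV)).erase k).filter (fun x => x < k)).card) * sgn q := by
  classical
  set v0 := V.min' hV with hv0
  set W := (V.erase v0).erase k with hW
  have hnm : (v0, k) ∉ q := pair_not_mem hq (by
    intro hc
    exact (Finset.notMem_erase v0 V) (Finset.mem_of_mem_erase hc))
  rw [sgn, sgn, cross_insert hnm, pow_add, mul_comm]
  congr 1
  apply neg_one_pow_mod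
  set s := W.filter (fun x => x < k) with hs
  have hcard := card_eq_sum_pairs hq s (Finset.filter_subset _ _)
  have hkk : v0 < k := min_lt_of_mem_erase hV hk
  have hper : ∀ f ∈ q, chi (v0, k) f % 2
      = ((if f.1 ∈ s then 1 else 0) + (if f.2 ∈ s then 1 else 0)) % 2 := by
    intro f hf
    obtain ⟨hford, hf1, hf2⟩ := hq.1 f hf
    have hf1V : f.1 ∈ W := hf1
    have hf2V : f.2 ∈ W := hf2
    have hf1v0 : v0 < f.1 := min_lt_of_mem_erase hV (Finset.mem_of_mem_erase hf1V)
    have hf2v0 : v0 < f.2 := min_lt_of_mem_erase hV (Finset.mem_of_mem_erase hf2V)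
    have hf1k : f.1 ≠ k := Finset.ne_of_mem_erase hf1V
    have hf2k : f.2 ≠ k := Finset.ne_of_mem_erase hf2V
    have h1s : f.1 ∈ s ↔ f.1 < k := by simp [hs, hf1V]
    have h2s : f.2 ∈ s ↔ f.2 < k := by simp [hs, hf2V]
    rw [chi_mod (v0,k) f hkk hford (by omega) (by omega) (fun h => hf1k h.symm)
        (fun h => hf2k h.symm)]
    have hrw : ((if f.1 ∈ s then (1:ℕ) else 0) + (if f.2 ∈ s then 1 else 0))
        = ((if f.1 < k then 1 else 0) + (if f.2 < k then 1 else 0)) := by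
      rw [if_congr h1s rfl rfl, if_congr h2s rfl rfl]
    rw [hrw]
    simp only [phi]
    split_ifs <;> omega
  calc (∑ f ∈ q, chi (v0,k) f) % 2
      = (∑ f ∈ q, chi (v0,k) f % 2) % 2 := Finset.sum_nat_mod _ _ _
    _ = (∑ f ∈ q, ((if f.1 ∈ s then 1 else 0) + (if f.2 ∈ s then 1 else 0)) % 2) % 2 := by
        rw [Finset.sum_congr rfl hper]
    _ = (∑ f ∈ q, ((if f.1 ∈ s then 1 else 0) + (if f.2 ∈ s then 1 else 0))) % 2 :=
        (Finset.sum_nat_mod _ _ _).symm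
    _ = s.card % 2 := by rw [← hcard]

end
end PfSq
namespace PfSq
noncomputable section
open Finset Polynomial

lemma pmate_cases {V : Finset ℕ} {p : Finset (ℕ × ℕ)} (hp : PM V p) {i : ℕ}
    (hi : i ∈ V) :
    pmate p i = (i, partner p i) ∨ pmate p i = (partner p i, i) := by
  have hord := (hp.1 _ (pmate_mem hp hi)).1
  rcases pmate_spec hp hi with h | h
  · left
    rw [partner, if_pos h]
    exact Prod.ext h.symm rfl
  · right
    rw [partner, if_neg (by omega)]
    exact Prod.ext rfl h.symm

lemma partner_mem {V : Finset ℕ} {p : Finset (ℕ × ℕ)} (hp : PM V p) {i : ℕ}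
    (hi : i ∈ V) : partner p i ∈ V := by
  have hm := pmate_mem hp hi
  obtain ⟨_, h1, h2⟩ := hp.1 _ hm
  rcases pmate_cases hp hi with h | h <;> rw [h] at h1 h2
  · exact h2
  · exact h1

lemma partner_ne {V : Finset ℕ} {p : Finset (ℕ × ℕ)} (hp : PM V p) {i : ℕ}
    (hi : i ∈ V) : partner p i ≠ i := by
  have hord := (hp.1 _ (pmate_mem hp hi)).1
  rcases pmate_cases hp hi with h | h <;> rw [h] at hord
  · exact fun hc => absurd (hc ▸ hord) (lt_irrefl _)
  · exact fun hc => absurd (hc ▸ hord) (lt_irrefl _)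

lemma pmate_eq_minmax {V : Finset ℕ} {p : Finset (ℕ × ℕ)} (hp : PM V p) {i : ℕ}
    (hi : i ∈ V) :
    pmate p i = (min i (partner p i), max i (partner p i)) := by
  have hord := (hp.1 _ (pmate_mem hp hi)).1
  rcases pmate_cases hp hi with h | h <;> rw [h] at hord ⊢ <;>
    simp only [Prod.mk.injEq] <;> constructor <;> omega

lemma pair_partner_mem {V : Finset ℕ} {p : Finset (ℕ × ℕ)} (hp : PM V p) {i : ℕ}
    (hi : i ∈ V) :
    (min i (partner p i), max i (partner p i)) ∈ p := by
  rw [← pmate_eq_minmax hp hi]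
  exact pmate_mem hp hi

lemma partner_eq_of_fst {V : Finset ℕ} {p : Finset (ℕ × ℕ)} (hp : PM V p) {i : ℕ}
    (hi : i ∈ V) {e : ℕ × ℕ} (he : e ∈ p) (h : i = e.1) : partner p i = e.2 := by
  have := pmate_eq hp hi he (Or.inl h)
  have hord := (hp.1 _ he).1
  rw [partner, this, if_pos h]

lemma partner_eq_of_snd {V : Finset ℕ} {p : Finset (ℕ × ℕ)} (hp : PM V p) {i : ℕ}
    (hi : i ∈ V) {e : ℕ × ℕ} (he : e ∈ p) (h : i = e.2) : partner p i = e.1 := by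
  have := pmate_eq hp hi he (Or.inr h)
  have hord := (hp.1 _ he).1
  rw [partner, this, if_neg (by omega)]

lemma four_chi_even (v0 a b j : ℕ) (f : ℕ × ℕ) (hford : f.1 < f.2)
    (h0a : v0 < a) (h0b : v0 < b) (h0j : v0 < j)
    (haj : a ≠ j) (hbj : b ≠ j)
    (hd : f.1 ≠ v0 ∧ f.1 ≠ a ∧ f.1 ≠ b ∧ f.1 ≠ j ∧ f.2 ≠ v0 ∧ f.2 ≠ a ∧ f.2 ≠ b ∧ f.2 ≠ j) :
    (chi (v0, a) f + chi (min j b, max j b) f + chi (v0, b) f + chi (min j a, max j a) f) % 2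
      = 0 := by
  obtain ⟨d1, d2, d3, d4, d5, d6, d7, d8⟩ := hd
  have h1 := chi_mod (v0, a) f h0a hford (by omega) (by omega) (by omega) (by omega)
  have h2 := chi_mod (min j b, max j b) f (by dsimp; omega) hford
    (by dsimp; omega) (by dsimp; omega) (by dsimp; omega) (by dsimp; omega)
  have h3 := chi_mod (v0, b) f h0b hford (by omega) (by omega) (by omega) (by omega)
  have h4 := chi_mod (min j a, max j a) f (by dsimp; omega) hford
    (by dsimp; omega) (by dsimp; omega) (by dsimp; omega) (by dsimp; omega)
  have e2 := phi_minmax f j b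
  have e4 := phi_minmax f j a
  dsimp only at h1 h2 h3 h4
  omega

lemma ss_parity (v0 a b j : ℕ) (h0a : v0 < a) (h0b : v0 < b) (h0j : v0 < j)
    (hab : a ≠ b) (haj : a ≠ j) (hbj : b ≠ j) :
    (chi (v0, a) (min j b, max j b) + chi (v0, b) (min j a, max j a)
      + (if a < j then 1 else 0) + (if b < j then 1 else 0)) % 2 = 1 := by
  unfold chi xi
  dsimp only
  split_ifs <;> omega

lemma neg_one_pow_eq_neg {m n : ℕ} (h : (m + n) % 2 = 1) :
    ((-1 : ℂ)) ^ m = -((-1 : ℂ)) ^ n := by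
  have h2 : ((-1 : ℂ)) ^ n * ((-1 : ℂ)) ^ n = 1 := by
    rw [← pow_add]
    rw [neg_one_pow_mod (n := n + n) (m := 0) (by omega)]
    norm_num
  have h3 : ((-1 : ℂ)) ^ (m + n) = -1 := by
    rw [neg_one_pow_mod (n := m + n) (m := 1) (by omega)]
    norm_num
  calc ((-1 : ℂ)) ^ m = ((-1 : ℂ)) ^ m * (((-1 : ℂ)) ^ n * ((-1 : ℂ)) ^ n) := by
        rw [h2, mul_one]
    _ = ((-1 : ℂ)) ^ (m + n) * ((-1 : ℂ)) ^ n := by rw [← pow_add]; ring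
    _ = -((-1 : ℂ)) ^ n := by rw [h3]; ring

end
end PfSq
namespace PfSq
noncomputable section
open Finset Polynomial

def tau (v0 j : ℕ) (p : Finset (ℕ × ℕ)) : Finset (ℕ × ℕ) :=
  insert (v0, partner p j)
    (insert (min j (partner p v0), max j (partner p v0))
      ((p.erase (v0, partner p v0)).erase
        (min j (partner p j), max j (partner p j))))

section swap
variable {V : Finset ℕ} {j : ℕ} {p : Finset (ℕ × ℕ)}

lemma swap_basics (hV : V.Nonempty) (hj : j ∈ V.erase (V.min' hV))
    (hp : PM V p) (hnj : ((V.min' hV), j) ∉ p) :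
    V.min' hV < partner p (V.min' hV) ∧ V.min' hV < partner p j ∧ V.min' hV < j ∧
    partner p (V.min' hV) ≠ partner p j ∧ partner p (V.min' hV) ≠ j ∧ partner p j ≠ j ∧
    ((V.min' hV), partner p (V.min' hV)) ∈ p ∧
    (min j (partner p j), max j (partner p j)) ∈ p ∧
    PM ((((V.erase (V.min' hV)).erase (partner p (V.min' hV))).erase
          (min j (partner p j))).erase (max j (partner p j)))
      ((p.erase ((V.min' hV), partner p (V.min' hV))).erase
        (min j (partner p j), max j (partner p j))) ∧
    (∀ x, x ∈ (((V.erase (V.min' hV)).erase (partner p (V.min' hV))).erase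
          (min j (partner p j))).erase (max j (partner p j)) ↔
        (x ∈ V ∧ x ≠ V.min' hV ∧ x ≠ partner p (V.min' hV) ∧ x ≠ j ∧ x ≠ partner p j)) := by
  set v0 := V.min' hV with hv0def
  set a := partner p v0 with hadef
  set b := partner p j with hbdef
  have hv0V : v0 ∈ V := V.min'_mem hV
  have hjV : j ∈ V := Finset.mem_of_mem_erase hj
  have B2 : v0 < j := min_lt_of_mem_erase hV hj
  have B7 : (v0, a) ∈ p := pair_min_mem hV hp
  have haVe : a ∈ V.erase v0 := partner_min_mem hV hp
  have haV : a ∈ V := Finset.mem_of_mem_erase haVe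
  have B1 : v0 < a := by
    have := V.min'_le _ haV
    have := Finset.ne_of_mem_erase haVe
    omega
  have hbV : b ∈ V := partner_mem hp hjV
  have B5 : b ≠ j := partner_ne hp hjV
  have B8 : (min j b, max j b) ∈ p := pair_partner_mem hp hjV
  have B4 : a ≠ j := by
    intro h
    rw [h] at B7
    exact hnj B7
  have B3 : v0 < b := by
    rcases Nat.lt_or_ge v0 b with h | h
    · exact h
    have hbv0 : b = v0 := by
      have := V.min'_le _ hbV
      omega
    exfalso
    apply hnj
    have : (min j b, max j b) = (v0, j) := by
      rw [hbv0]
      exact Prod.ext (by omega) (by omega)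
    rwa [this] at B8
  have B6 : a ≠ b := by
    intro h
    have h1 : pmate p a = (v0, a) := pmate_eq hp haV B7 (Or.inr rfl)
    have h2 : pmate p a = (min j b, max j b) :=
      pmate_eq hp haV B8 (by dsimp; omega)
    rw [h1] at h2
    have := congrArg Prod.fst h2
    dsimp at this
    omega
  refine ⟨B1, B3, B2, B6, B4, B5, B7, B8, ?_, ?_⟩
  · have he2ne : (min j b, max j b) ≠ (v0, a) := by
      intro h
      have := congrArg Prod.fst h
      dsimp at this
      omega
    have step1 := PM_erase hp B7
    have he2' : (min j b, max j b) ∈ p.erase (v0, a) :=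
      Finset.mem_erase.2 ⟨he2ne, B8⟩
    exact PM_erase step1 he2'
  · intro x
    simp only [Finset.mem_erase]
    constructor
    · rintro ⟨h1, h2, h3, h4, h5⟩
      exact ⟨h5, h4, h3, by omega, by omega⟩
    · rintro ⟨h1, h2, h3, h4, h5⟩
      exact ⟨by omega, by omega, h3, h2, h1⟩

lemma tau_spec (hV : V.Nonempty) (hj : j ∈ V.erase (V.min' hV))
    (hp : PM V p) (hnj : ((V.min' hV), j) ∉ p) :
    PM V (tau (V.min' hV) j p) ∧ ((V.min' hV), j) ∉ tau (V.min' hV) j p ∧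
    partner (tau (V.min' hV) j p) (V.min' hV) = partner p j ∧
    partner (tau (V.min' hV) j p) j = partner p (V.min' hV) ∧
    ((tau (V.min' hV) j p).erase ((V.min' hV), partner p j)).erase
        (min j (partner p (V.min' hV)), max j (partner p (V.min' hV)))
      = (p.erase ((V.min' hV), partner p (V.min' hV))).erase
          (min j (partner p j), max j (partner p j)) := by
  obtain ⟨B1, B3, B2, B6, B4, B5, B7, B8, B9, B10⟩ := swap_basics hV hj hp hnj
  set v0 := V.min' hV with hv0def
  set a := partner p v0 with hadef
  set b := partner p j with hbdef
  set q := (p.erase (v0, a)).erase (min j b, max j b) with hqdef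
  set W2 := (((V.erase v0).erase a).erase (min j b)).erase (max j b) with hW2def
  have hv0V : v0 ∈ V := V.min'_mem hV
  have hjV : j ∈ V := Finset.mem_of_mem_erase hj
  have haV : a ∈ V := Finset.mem_of_mem_erase (partner_min_mem hV hp)
  have hbV : b ∈ V := partner_mem hp hjV
  have htau : tau v0 j p = insert (v0, b) (insert (min j a, max j a) q) := rfl
  have hminjaW2 : min j a ∉ W2 := by
    intro h
    rw [B10] at h
    omega
  have hmaxjaW2 : max j a ∉ W2 := by
    intro h
    rw [B10] at h
    omega
  have hv0W2 : v0 ∉ W2 := by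
    intro h
    rw [B10] at h
    omega
  have hbW2 : b ∉ W2 := by
    intro h
    rw [B10] at h
    omega
  have hja : min j a < max j a := by omega
  have hPM1 := PM_insert B9 hja hminjaW2 hmaxjaW2
  have hv0G1 : v0 ∉ insert (min j a) (insert (max j a) W2) := by
    simp only [Finset.mem_insert]
    push_neg
    exact ⟨by omega, by omega, hv0W2⟩
  have hbG1 : b ∉ insert (min j a) (insert (max j a) W2) := by
    simp only [Finset.mem_insert]
    push_neg
    exact ⟨by omega, by omega, hbW2⟩
  have hPM2 := PM_insert hPM1 B3 hv0G1 hbG1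
  have hground : insert v0 (insert b (insert (min j a) (insert (max j a) W2))) = V := by
    ext x
    simp only [Finset.mem_insert]
    constructor
    · rintro (rfl | rfl | h | h | h)
      · exact hv0V
      · exact hbV
      · rcases Nat.le_total j a with hh | hh
        · rw [min_eq_left hh] at h
          exact h ▸ hjV
        · rw [min_eq_right hh] at h
          exact h ▸ haV
      · rcases Nat.le_total j a with hh | hh
        · rw [max_eq_right hh] at h
          exact h ▸ haV
        · rw [max_eq_left hh] at h
          exact h ▸ hjV
      · exact ((B10 x).1 h).1
    · intro hx
      by_cases h1 : x = v0
      · exact Or.inl h1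
      by_cases h2 : x = b
      · exact Or.inr (Or.inl h2)
      by_cases h3 : x = j
      · right; right
        rcases Nat.le_total j a with hh | hh
        · exact Or.inl (by omega)
        · exact Or.inr (Or.inl (by omega))
      by_cases h4 : x = a
      · right; right
        rcases Nat.le_total j a with hh | hh
        · exact Or.inr (Or.inl (by omega))
        · exact Or.inl (by omega)
      · right; right; right; right
        exact (B10 x).2 ⟨hx, h1, h4, h3, h2⟩
  have hPMtau : PM V (tau v0 j p) := by
    rw [htau, ← hground]
    exact hPM2
  have hnotmem : (v0, j) ∉ tau v0 j p := by
    rw [htau]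
    intro h
    rcases Finset.mem_insert.1 h with h | h
    · have := congrArg Prod.snd h
      dsimp at this
      omega
    rcases Finset.mem_insert.1 h with h | h
    · have := congrArg Prod.fst h
      dsimp at this
      omega
    · have hq2 := B9
      have := (hq2.1 _ h).2.1
      dsimp at this
      exact hv0W2 this
  have hpt1 : partner (tau v0 j p) v0 = b :=
    partner_eq_of_fst hPMtau hv0V (e := (v0, b))
      (by rw [htau]; exact Finset.mem_insert_self _ _) rfl
  have hpt2 : partner (tau v0 j p) j = a := by
    have hmem : (min j a, max j a) ∈ tau v0 j p := by
      rw [htau]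
      exact Finset.mem_insert_of_mem (Finset.mem_insert_self _ _)
    rcases Nat.le_total j a with hh | hh
    · have h1 := partner_eq_of_fst hPMtau hjV hmem (by dsimp; omega)
      rw [h1]
      dsimp
      omega
    · have h1 := partner_eq_of_snd hPMtau hjV hmem (by dsimp; omega)
      rw [h1]
      dsimp
      omega
  have herase : ((tau v0 j p).erase (v0, b)).erase (min j a, max j a) = q := by
    rw [htau]
    rw [Finset.erase_insert]
    · rw [Finset.erase_insert]
      intro h
      exact hminjaW2 ((B9.1 _ h).2.1 : _)
    · intro h
      rcases Finset.mem_insert.1 h with h | h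
      · have := congrArg Prod.fst h
        dsimp at this
        omega
      · exact hv0W2 ((B9.1 _ h).2.1 : _)
  exact ⟨hPMtau, hnotmem, hpt1, hpt2, herase⟩

lemma pm_decomp (hV : V.Nonempty) (hj : j ∈ V.erase (V.min' hV))
    (hp : PM V p) (hnj : ((V.min' hV), j) ∉ p) :
    insert ((V.min' hV), partner p (V.min' hV))
      (insert (min j (partner p j), max j (partner p j))
        ((p.erase ((V.min' hV), partner p (V.min' hV))).erase
          (min j (partner p j), max j (partner p j)))) = p := by
  obtain ⟨B1, B3, B2, B6, B4, B5, B7, B8, B9, B10⟩ := swap_basics hV hj hp hnj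
  set v0 := V.min' hV
  set a := partner p v0
  set b := partner p j
  have he2ne : (min j b, max j b) ≠ (v0, a) := by
    intro h
    have := congrArg Prod.fst h
    dsimp at this
    omega
  have he2' : (min j b, max j b) ∈ p.erase (v0, a) := Finset.mem_erase.2 ⟨he2ne, B8⟩
  rw [Finset.insert_erase he2', Finset.insert_erase B7]

lemma swap_cancel (hV : V.Nonempty) (hj : j ∈ V.erase (V.min' hV))
    (hp : PM V p) (hnj : ((V.min' hV), j) ∉ p)
    (u : ℕ → ℂ) (hu : u (V.min' hV) = u j) :
    sgn p * ∏ e ∈ p, (u e.1 - u e.2)⁻¹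
      + sgn (tau (V.min' hV) j p) * ∏ e ∈ tau (V.min' hV) j p, (u e.1 - u e.2)⁻¹ = 0 := by
  obtain ⟨B1, B3, B2, B6, B4, B5, B7, B8, B9, B10⟩ := swap_basics hV hj hp hnj
  set v0 := V.min' hV with hv0def
  set a := partner p v0 with hadef
  set b := partner p j with hbdef
  set q := (p.erase (v0, a)).erase (min j b, max j b) with hqdef
  have hdecomp := pm_decomp hV hj hp hnj
  have htau : tau v0 j p = insert (v0, b) (insert (min j a, max j a) q) := rfl
  have hminjbW2 : (min j b, max j b) ∉ q := by
    apply pair_not_mem B9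
    intro h
    rw [B10] at h
    omega
  have hv0q : ∀ y, (v0, y) ∉ q := by
    intro y
    apply pair_not_mem B9
    intro h
    rw [B10] at h
    omega
  have hminjaq : (min j a, max j a) ∉ q := by
    apply pair_not_mem B9
    intro h
    rw [B10] at h
    omega
  have hn1 : (v0, a) ∉ insert (min j b, max j b) q := by
    intro h
    rcases Finset.mem_insert.1 h with h | h
    · have := congrArg Prod.fst h
      dsimp at this
      omega
    · exact hv0q a h
  have hn1' : (v0, b) ∉ insert (min j a, max j a) q := by
    intro h
    rcases Finset.mem_insert.1 h with h | h
    · have := congrArg Prod.fst h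
      dsimp at this
      omega
    · exact hv0q b h
  have hcp : cross p = cross q + (∑ f ∈ q, chi (min j b, max j b) f)
      + (chi (v0, a) (min j b, max j b) + ∑ f ∈ q, chi (v0, a) f) := by
    rw [← hdecomp, cross_insert hn1, cross_insert hminjbW2, Finset.sum_insert hminjbW2]
  have hct : cross (tau v0 j p) = cross q + (∑ f ∈ q, chi (min j a, max j a) f)
      + (chi (v0, b) (min j a, max j a) + ∑ f ∈ q, chi (v0, b) f) := by
    rw [htau, cross_insert hn1', cross_insert hminjaq, Finset.sum_insert hminjaq]
  have hsum4 : (∑ f ∈ q, (chi (v0, a) f + chi (min j b, max j b) f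
      + chi (v0, b) f + chi (min j a, max j a) f)) % 2 = 0 := by
    have hper : ∀ f ∈ q, (chi (v0, a) f + chi (min j b, max j b) f
        + chi (v0, b) f + chi (min j a, max j a) f) % 2 = 0 := by
      intro f hf
      obtain ⟨hford, hf1, hf2⟩ := B9.1 f hf
      rw [B10] at hf1 hf2
      exact four_chi_even v0 a b j f hford B1 B3 B2 B4 B5
        ⟨hf1.2.1, hf1.2.2.1, hf1.2.2.2.2, hf1.2.2.2.1,
         hf2.2.1, hf2.2.2.1, hf2.2.2.2.2, hf2.2.2.2.1⟩
    calc (∑ f ∈ q, (chi (v0, a) f + chi (min j b, max j b) f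
        + chi (v0, b) f + chi (min j a, max j a) f)) % 2
        = (∑ f ∈ q, (chi (v0, a) f + chi (min j b, max j b) f
          + chi (v0, b) f + chi (min j a, max j a) f) % 2) % 2 :=
          Finset.sum_nat_mod _ _ _
      _ = (∑ _f ∈ q, 0) % 2 := by rw [Finset.sum_congr rfl hper]
      _ = 0 := by simp
  have hsplit : (∑ f ∈ q, (chi (v0, a) f + chi (min j b, max j b) f
      + chi (v0, b) f + chi (min j a, max j a) f))
      = (∑ f ∈ q, chi (v0, a) f) + (∑ f ∈ q, chi (min j b, max j b) f)
        + (∑ f ∈ q, chi (v0, b) f) + (∑ f ∈ q, chi (min j a, max j a) f) := by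
    rw [← Finset.sum_add_distrib, ← Finset.sum_add_distrib, ← Finset.sum_add_distrib]
  have hss := ss_parity v0 a b j B1 B3 B2 B6 B4 B5
  have hparity : ((cross p + (if b < j then 1 else 0))
      + (cross (tau v0 j p) + (if a < j then 1 else 0))) % 2 = 1 := by
    omega
  have hkey := neg_one_pow_eq_neg (m := cross p + (if b < j then 1 else 0))
    (n := cross (tau v0 j p) + (if a < j then 1 else 0)) hparity
  rw [pow_add, pow_add] at hkey
  have hPp : ∏ e ∈ p, (u e.1 - u e.2)⁻¹
      = (u v0 - u a)⁻¹ * ((u (min j b) - u (max j b))⁻¹ * ∏ e ∈ q, (u e.1 - u e.2)⁻¹) := by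
    rw [← hdecomp, Finset.prod_insert hn1, Finset.prod_insert hminjbW2]
  have hPt : ∏ e ∈ tau v0 j p, (u e.1 - u e.2)⁻¹
      = (u v0 - u b)⁻¹ * ((u (min j a) - u (max j a))⁻¹ * ∏ e ∈ q, (u e.1 - u e.2)⁻¹) := by
    rw [htau, Finset.prod_insert hn1', Finset.prod_insert hminjaq]
  have hw2 : (u (min j b) - u (max j b))⁻¹
      = (-1 : ℂ) ^ (if b < j then 1 else 0) * (u j - u b)⁻¹ := by
    rcases Nat.lt_or_ge b j with h | h
    · rw [min_eq_right h.le, max_eq_left h.le, if_pos h, ← neg_sub (u j) (u b), inv_neg]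
      ring
    · have hle : j ≤ b := h
      rw [min_eq_left hle, max_eq_right hle, if_neg (by omega)]
      ring
  have hw2' : (u (min j a) - u (max j a))⁻¹
      = (-1 : ℂ) ^ (if a < j then 1 else 0) * (u j - u a)⁻¹ := by
    rcases Nat.lt_or_ge a j with h | h
    · rw [min_eq_right h.le, max_eq_left h.le, if_pos h, ← neg_sub (u j) (u a), inv_neg]
      ring
    · have hle : j ≤ a := h
      rw [min_eq_left hle, max_eq_right hle, if_neg (by omega)]
      ring
  rw [sgn, sgn, hPp, hPt, hw2, hw2', hu]
  linear_combination ((u j - u a)⁻¹ * (u j - u b)⁻¹ * ∏ e ∈ q, (u e.1 - u e.2)⁻¹) * hkey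

lemma swap_sum (hV : V.Nonempty) (hj : j ∈ V.erase (V.min' hV))
    (u : ℕ → ℂ) (hu : u (V.min' hV) = u j) :
    ∑ p ∈ MS V, sgn p * ∏ e ∈ p, (u e.1 - u e.2)⁻¹ = 0 := by
  set v0 := V.min' hV with hv0def
  have hzero : ∀ p, (v0, j) ∈ p → sgn p * ∏ e ∈ p, (u e.1 - u e.2)⁻¹ = 0 := by
    intro p hmem
    have : (u (v0, j).1 - u (v0, j).2)⁻¹ = 0 := by
      dsimp
      rw [hu, sub_self, inv_zero]
    rw [Finset.prod_eq_zero hmem this, mul_zero]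
  refine Finset.sum_involution
    (fun p _ => if (v0, j) ∈ p then p else tau v0 j p) ?_ ?_ ?_ ?_
  · intro p hps
    by_cases h : (v0, j) ∈ p
    · rw [if_pos h, hzero p h]
      simp
    · rw [if_neg h]
      exact swap_cancel hV hj (mem_MS.1 hps) h u hu
  · intro p hps hf
    by_cases h : (v0, j) ∈ p
    · exact absurd (hzero p h) hf
    · rw [if_neg h]
      intro hc
      obtain ⟨B1, B3, B2, B6, B4, B5, B7, B8, B9, B10⟩ :=
        swap_basics hV hj (mem_MS.1 hps) h
      have hmem : (v0, partner p j) ∈ p := by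
        have : (v0, partner p j) ∈ tau v0 j p := Finset.mem_insert_self _ _
        rwa [hc] at this
      have h1 : pmate p v0 = (v0, partner p j) :=
        pmate_eq (mem_MS.1 hps) (V.min'_mem hV) hmem (Or.inl rfl)
      have h2 := pmate_min hV (mem_MS.1 hps)
      rw [h1] at h2
      have := congrArg Prod.snd h2
      dsimp at this
      exact B6 this.symm
  · intro p hps
    by_cases h : (v0, j) ∈ p
    · rwa [if_pos h]
    · rw [if_neg h]
      exact mem_MS.2 (tau_spec hV hj (mem_MS.1 hps) h).1
  · intro p hps
    by_cases h : (v0, j) ∈ p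
    · simp only [if_pos h]
    · simp only [if_neg h]
      obtain ⟨hPMt, hnm, hpt1, hpt2, herase⟩ := tau_spec hV hj (mem_MS.1 hps) h
      rw [if_neg hnm]
      show tau v0 j (tau v0 j p) = p
      rw [tau, hpt1, hpt2, herase]
      exact pm_decomp hV hj (mem_MS.1 hps) h

end swap
end
end PfSq
namespace PfSq
noncomputable section
open Finset Polynomial

def S (V : Finset ℕ) (z : ℕ → ℂ) : ℂ :=
  ∑ p ∈ MS V, sgn p * ∏ e ∈ p, (z e.1 - z e.2)⁻¹

def T (V : Finset ℕ) (z : ℕ → ℂ) : ℂ :=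
  ∑ p ∈ MS V, ∏ e ∈ p, ((z e.1 - z e.2)⁻¹) ^ 2

lemma MS_empty : MS (∅ : Finset ℕ) = {∅} := by
  ext p
  simp only [mem_MS, Finset.mem_singleton]
  constructor
  · intro h
    rw [Finset.eq_empty_iff_forall_notMem]
    intro e he
    exact absurd (h.1 e he).2.1 (Finset.notMem_empty _)
  · rintro rfl
    constructor
    · intro e he
      exact absurd he (Finset.notMem_empty _)
    · intro i hi
      exact absurd hi (Finset.notMem_empty _)

lemma S_empty (z : ℕ → ℂ) : S ∅ z = 1 := by
  rw [S, MS_empty, Finset.sum_singleton]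
  simp [sgn, cross]

lemma T_empty (z : ℕ → ℂ) : T ∅ z = 1 := by
  rw [T, MS_empty, Finset.sum_singleton]
  simp

lemma sq_dvd_of_isRoot {G : Polynomial ℂ} {a : ℂ} (h1 : G.eval a = 0)
    (h2 : (Polynomial.derivative G).eval a = 0) : (X - C a) ^ 2 ∣ G := by
  obtain ⟨G1, rfl⟩ := (Polynomial.dvd_iff_isRoot.2 h1)
  have hd : Polynomial.derivative ((X - C a) * G1)
      = G1 + (X - C a) * Polynomial.derivative G1 := by
    rw [Polynomial.derivative_mul, Polynomial.derivative_X_sub_C, one_mul]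
  rw [hd] at h2
  simp only [Polynomial.eval_add, Polynomial.eval_mul, Polynomial.eval_sub,
    Polynomial.eval_X, Polynomial.eval_C, sub_self, zero_mul, add_zero] at h2
  obtain ⟨G2, rfl⟩ := (Polynomial.dvd_iff_isRoot.2 h2)
  rw [pow_two]
  exact ⟨G2, by ring⟩

end
end PfSq
namespace PfSq
noncomputable section
open Finset Polynomial

theorem S_sq_eq_T : ∀ n : ℕ, ∀ V : Finset ℕ, V.card = 2 * n →
    ∀ z : ℕ → ℂ, Set.InjOn z ↑V → (S V z) ^ 2 = T V z := by
  intro n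
  induction n with
  | zero =>
    intro V hV z hz
    have hVe : V = ∅ := Finset.card_eq_zero.1 (by omega)
    subst hVe
    rw [S_empty, T_empty]
    norm_num
  | succ n IH =>
    intro V hV z hz
    have hVne : V.Nonempty := Finset.card_pos.1 (by omega)
    set v0 := V.min' hVne with hv0def
    set V' := V.erase v0 with hV'def
    have hv0V : v0 ∈ V := V.min'_mem hVne
    have hV'card : V'.card = 2 * n + 1 := by
      rw [hV'def, Finset.card_erase_of_mem hv0V, hV]
      omega
    have hv0V' : v0 ∉ V' := Finset.notMem_erase _ _
    have hsubV' : V' ⊆ V := Finset.erase_subset _ _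
    have hzne : ∀ j ∈ V, ∀ k ∈ V, j ≠ k → z j - z k ≠ 0 := by
      intro j hj k hk hjk
      exact sub_ne_zero.2 (fun h => hjk (hz (Finset.mem_coe.2 hj) (Finset.mem_coe.2 hk) h))
    set Q : ℕ → Polynomial ℂ := fun k => ∏ l ∈ V'.erase k, (X - C (z l)) with hQdef
    set Shat : Polynomial ℂ := ∑ k ∈ V', ∑ q ∈ MS (V'.erase k),
      C (sgn (insert (v0, k) q) * ∏ e ∈ q, (z e.1 - z e.2)⁻¹) * Q k with hShatdef
    set That : Polynomial ℂ := ∑ k ∈ V', ∑ q ∈ MS (V'.erase k),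
      C (∏ e ∈ q, ((z e.1 - z e.2)⁻¹) ^ 2) * (Q k) ^ 2 with hThatdef
    have hQdeg : ∀ k ∈ V', (Q k).natDegree = 2 * n := by
      intro k hk
      rw [hQdef]
      rw [Polynomial.natDegree_prod _ _ (fun l _ => Polynomial.X_sub_C_ne_zero (z l))]
      simp only [Polynomial.natDegree_X_sub_C]
      rw [Finset.sum_const, Finset.card_erase_of_mem hk, hV'card, smul_eq_mul, mul_one]
      omega
    have hSdeg : Shat.natDegree ≤ 2 * n := by
      rw [hShatdef]
      refine Polynomial.natDegree_sum_le_of_forall_le _ _ ?_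
      intro k hk
      refine Polynomial.natDegree_sum_le_of_forall_le _ _ ?_
      intro q hq
      exact le_trans (Polynomial.natDegree_C_mul_le _ _) (le_of_eq (hQdeg k hk))
    have hTdeg : That.natDegree ≤ 4 * n := by
      rw [hThatdef]
      refine Polynomial.natDegree_sum_le_of_forall_le _ _ ?_
      intro k hk
      refine Polynomial.natDegree_sum_le_of_forall_le _ _ ?_
      intro q hq
      refine le_trans (Polynomial.natDegree_C_mul_le _ _) ?_
      rw [Polynomial.natDegree_pow, hQdeg k hk]
      omega
    -- partition identity for arbitrary weights
    have hnm : ∀ k, ∀ q ∈ MS (V'.erase k), (v0, k) ∉ q := by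
      intro k q hq
      exact pair_not_mem (mem_MS.1 hq)
        (fun h => hv0V' (Finset.mem_of_mem_erase h))
    have hqe1 : ∀ k, ∀ q ∈ MS (V'.erase k), ∀ e ∈ q, e.1 ≠ v0 ∧ e.2 ≠ v0 := by
      intro k q hq e he
      have h1 := (mem_MS.1 hq).1 e he
      constructor
      · intro hc
        apply hv0V'
        exact Finset.mem_of_mem_erase (hc ▸ h1.2.1)
      · intro hc
        apply hv0V'
        exact Finset.mem_of_mem_erase (hc ▸ h1.2.2)
    have hpart : ∀ u : ℕ → ℂ,
        (∑ p ∈ MS V, sgn p * ∏ e ∈ p, (u e.1 - u e.2)⁻¹)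
        = ∑ k ∈ V', ∑ q ∈ MS (V'.erase k),
            sgn (insert (v0, k) q) * ((u v0 - u k)⁻¹ * ∏ e ∈ q, (u e.1 - u e.2)⁻¹) := by
      intro u
      rw [sum_MS_partition hVne (fun _ p => sgn p * ∏ e ∈ p, (u e.1 - u e.2)⁻¹)]
      refine Finset.sum_congr rfl ?_
      intro k hk
      refine Finset.sum_congr rfl ?_
      intro q hq
      rw [Finset.prod_insert (hnm k q hq)]
    have hpartT :
        T V z = ∑ k ∈ V', ∑ q ∈ MS (V'.erase k),
            ((z v0 - z k)⁻¹) ^ 2 * ∏ e ∈ q, ((z e.1 - z e.2)⁻¹) ^ 2 := by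
      rw [T, sum_MS_partition hVne (fun _ p => ∏ e ∈ p, ((z e.1 - z e.2)⁻¹) ^ 2)]
      refine Finset.sum_congr rfl ?_
      intro k hk
      refine Finset.sum_congr rfl ?_
      intro q hq
      rw [Finset.prod_insert (hnm k q hq)]
    have hdvdj : ∀ j ∈ V', (X - C (z j)) ^ 2 ∣ (Shat ^ 2 - That) := by
      intro j hj
      have hjV : j ∈ V := hsubV' hj
      have hjv0 : v0 < j := min_lt_of_mem_erase hVne hj
      set Wj := V'.erase j with hWjdef
      have hWjcard : Wj.card = 2 * n := by
        rw [hWjdef, Finset.card_erase_of_mem hj, hV'card]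
        omega
      have hWjsub : Wj ⊆ V := fun x hx => hsubV' (Finset.mem_of_mem_erase hx)
      have hIHj : (S Wj z) ^ 2 = T Wj z :=
        IH Wj hWjcard z (hz.mono (Finset.coe_subset.2 hWjsub))
      set Dj := Polynomial.eval (z j) (Q j) with hDjdef
      have hDj : Dj = ∏ l ∈ Wj, (z j - z l) := by
        rw [hDjdef, hQdef]
        rw [Polynomial.eval_prod]
        simp [hWjdef]
      have hDj0 : Dj ≠ 0 := by
        rw [hDj]
        refine Finset.prod_ne_zero_iff.2 ?_
        intro l hl
        exact hzne j hjV l (hWjsub hl) (Finset.ne_of_mem_erase hl).symm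
      have hQother : ∀ k, k ≠ j → Polynomial.eval (z j) (Q k) = 0 := by
        intro k hkj
        rw [hQdef]
        rw [Polynomial.eval_prod]
        refine Finset.prod_eq_zero (Finset.mem_erase.2 ⟨fun h => hkj h.symm, hj⟩) ?_
        simp
      have hQderiv : ∀ k, k ∈ V' → k ≠ j →
          Polynomial.eval (z j) (Polynomial.derivative (Q k)) = Dj * (z j - z k)⁻¹ := by
        intro k hkV hkj
        have hjmem : j ∈ V'.erase k := Finset.mem_erase.2 ⟨fun h => hkj h.symm, hj⟩
        have hsplit : Q k = (X - C (z j)) * ∏ l ∈ (V'.erase k).erase j, (X - C (z l)) := by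
          rw [hQdef]
          exact (Finset.mul_prod_erase _ _ hjmem).symm
        rw [hsplit, Polynomial.derivative_mul, Polynomial.derivative_X_sub_C, one_mul]
        rw [Polynomial.eval_add, Polynomial.eval_mul]
        simp only [Polynomial.eval_sub, Polynomial.eval_X, Polynomial.eval_C, sub_self,
          zero_mul, add_zero]
        rw [Polynomial.eval_prod]
        simp only [Polynomial.eval_sub, Polynomial.eval_X, Polynomial.eval_C]
        have hcomm : (V'.erase k).erase j = Wj.erase k := by
          rw [hWjdef, Finset.erase_right_comm]
        rw [hcomm]
        have hkWj : k ∈ Wj := Finset.mem_erase.2 ⟨hkj, hkV⟩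
        have h1 : (z j - z k) * ∏ l ∈ Wj.erase k, (z j - z l) = Dj := by
          rw [hDj]
          exact Finset.mul_prod_erase Wj (fun l => z j - z l) hkWj
        have hne := hzne j hjV k (hsubV' hkV) (fun h => hkj h.symm)
        rw [← h1, mul_comm (z j - z k), mul_assoc, mul_inv_cancel₀ hne, mul_one]
      set εj := ((-1 : ℂ)) ^ ((((V.erase v0).erase j).filter (fun x => x < j)).card)
        with hεdef
      have hsgn : ∀ q ∈ MS Wj, sgn (insert (v0, j) q) = εj * sgn q := by
        intro q hq
        exact sgn_insert_min hVne hj (mem_MS.1 hq)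
      have hε2 : εj * εj = 1 := by
        rw [hεdef, ← pow_add]
        exact Even.neg_one_pow ⟨_, rfl⟩
      have hevS0 : Polynomial.eval (z j) Shat = ∑ k ∈ V', ∑ q ∈ MS (V'.erase k),
          (sgn (insert (v0, k) q) * ∏ e ∈ q, (z e.1 - z e.2)⁻¹)
            * Polynomial.eval (z j) (Q k) := by
        rw [hShatdef, Polynomial.eval_finset_sum]
        refine Finset.sum_congr rfl ?_
        intro k hk
        rw [Polynomial.eval_finset_sum]
        refine Finset.sum_congr rfl ?_
        intro q hq
        rw [Polynomial.eval_mul, Polynomial.eval_C]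
      have hevalS : Polynomial.eval (z j) Shat = εj * Dj * S Wj z := by
        rw [hevS0, ← Finset.add_sum_erase _ _ hj]
        have hrest : ∑ k ∈ V'.erase j, ∑ q ∈ MS (V'.erase k),
            (sgn (insert (v0, k) q) * ∏ e ∈ q, (z e.1 - z e.2)⁻¹)
              * Polynomial.eval (z j) (Q k) = 0 := by
          refine Finset.sum_eq_zero ?_
          intro k hk
          refine Finset.sum_eq_zero ?_
          intro q hq
          rw [hQother k (Finset.ne_of_mem_erase hk), mul_zero]
        rw [hrest, add_zero, S, Finset.mul_sum]
        refine Finset.sum_congr rfl ?_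
        intro q hq
        rw [hsgn q hq, ← hDjdef]
        ring
      have hevalT : Polynomial.eval (z j) That = Dj ^ 2 * T Wj z := by
        have h0 : Polynomial.eval (z j) That = ∑ k ∈ V', ∑ q ∈ MS (V'.erase k),
            (∏ e ∈ q, ((z e.1 - z e.2)⁻¹) ^ 2) * (Polynomial.eval (z j) (Q k)) ^ 2 := by
          rw [hThatdef, Polynomial.eval_finset_sum]
          refine Finset.sum_congr rfl ?_
          intro k hk
          rw [Polynomial.eval_finset_sum]
          refine Finset.sum_congr rfl ?_
          intro q hq
          rw [Polynomial.eval_mul, Polynomial.eval_C, Polynomial.eval_pow]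
        rw [h0, ← Finset.add_sum_erase _ _ hj]
        have hrest : ∑ k ∈ V'.erase j, ∑ q ∈ MS (V'.erase k),
            (∏ e ∈ q, ((z e.1 - z e.2)⁻¹) ^ 2) * (Polynomial.eval (z j) (Q k)) ^ 2 = 0 := by
          refine Finset.sum_eq_zero ?_
          intro k hk
          refine Finset.sum_eq_zero ?_
          intro q hq
          rw [hQother k (Finset.ne_of_mem_erase hk)]
          ring
        rw [hrest, add_zero, T, Finset.mul_sum]
        refine Finset.sum_congr rfl ?_
        intro q hq
        rw [← hDjdef]
        ring
      have hRsum : ∑ k ∈ V', ∑ q ∈ MS (V'.erase k),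
          (sgn (insert (v0, k) q) * ∏ e ∈ q, (z e.1 - z e.2)⁻¹) * (z j - z k)⁻¹ = 0 := by
        set u := Function.update z v0 (z j) with hudef
        have hu0 : u v0 = z j := Function.update_self _ _ _
        have huj : u j = z j := Function.update_of_ne (by omega) _ _
        have hne' : ∀ x, x ≠ v0 → u x = z x := fun x hx => Function.update_of_ne hx _ _
        have hswap := swap_sum hVne hj u (by rw [hu0, huj])
        rw [hpart u] at hswap
        rw [← hswap]
        refine Finset.sum_congr rfl ?_
        intro k hk
        refine Finset.sum_congr rfl ?_
        intro q hq
        have hprodq : ∏ e ∈ q, (u e.1 - u e.2)⁻¹ = ∏ e ∈ q, (z e.1 - z e.2)⁻¹ := by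
          refine Finset.prod_congr rfl ?_
          intro e he
          rw [hne' e.1 (hqe1 k q hq e he).1, hne' e.2 (hqe1 k q hq e he).2]
        rw [hprodq, hu0, hne' k (Finset.ne_of_mem_erase hk)]
        ring
      have hevS'0 : Polynomial.eval (z j) (Polynomial.derivative Shat)
          = ∑ k ∈ V', ∑ q ∈ MS (V'.erase k),
            (sgn (insert (v0, k) q) * ∏ e ∈ q, (z e.1 - z e.2)⁻¹)
              * Polynomial.eval (z j) (Polynomial.derivative (Q k)) := by
        rw [hShatdef, Polynomial.derivative_sum, Polynomial.eval_finset_sum]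
        refine Finset.sum_congr rfl ?_
        intro k hk
        rw [Polynomial.derivative_sum, Polynomial.eval_finset_sum]
        refine Finset.sum_congr rfl ?_
        intro q hq
        rw [Polynomial.derivative_C_mul, Polynomial.eval_mul, Polynomial.eval_C]
      have hevalS' : Polynomial.eval (z j) (Polynomial.derivative Shat)
          = εj * S Wj z * Polynomial.eval (z j) (Polynomial.derivative (Q j)) := by
        rw [hevS'0, ← Finset.add_sum_erase _ _ hj]
        have hrest : ∑ k ∈ V'.erase j, ∑ q ∈ MS (V'.erase k),
            (sgn (insert (v0, k) q) * ∏ e ∈ q, (z e.1 - z e.2)⁻¹)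
              * Polynomial.eval (z j) (Polynomial.derivative (Q k)) = 0 := by
          have hstep : ∀ k ∈ V'.erase j, ∑ q ∈ MS (V'.erase k),
              (sgn (insert (v0, k) q) * ∏ e ∈ q, (z e.1 - z e.2)⁻¹)
                * Polynomial.eval (z j) (Polynomial.derivative (Q k))
              = Dj * ∑ q ∈ MS (V'.erase k),
                  (sgn (insert (v0, k) q) * ∏ e ∈ q, (z e.1 - z e.2)⁻¹) * (z j - z k)⁻¹ := by
            intro k hk
            rw [Finset.mul_sum]
            refine Finset.sum_congr rfl ?_
            intro q hq
            rw [hQderiv k (Finset.mem_of_mem_erase hk) (Finset.ne_of_mem_erase hk)]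
            ring
          rw [Finset.sum_congr rfl hstep, ← Finset.mul_sum]
          have hfull : ∑ k ∈ V'.erase j, ∑ q ∈ MS (V'.erase k),
              (sgn (insert (v0, k) q) * ∏ e ∈ q, (z e.1 - z e.2)⁻¹) * (z j - z k)⁻¹ = 0 := by
            have hjz : ∑ q ∈ MS (V'.erase j),
                (sgn (insert (v0, j) q) * ∏ e ∈ q, (z e.1 - z e.2)⁻¹) * (z j - z j)⁻¹ = 0 := by
              refine Finset.sum_eq_zero ?_
              intro q hq
              rw [sub_self, inv_zero, mul_zero]
            have := hRsum
            rw [← Finset.add_sum_erase _ _ hj, hjz, zero_add] at this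
            exact this
          rw [hfull, mul_zero]
        rw [hrest, add_zero, S, Finset.mul_sum, Finset.sum_mul]
        refine Finset.sum_congr rfl ?_
        intro q hq
        rw [hsgn q hq]
        ring
      have hevalT' : Polynomial.eval (z j) (Polynomial.derivative That)
          = T Wj z * (2 * Dj * Polynomial.eval (z j) (Polynomial.derivative (Q j))) := by
        have h0 : Polynomial.eval (z j) (Polynomial.derivative That)
            = ∑ k ∈ V', ∑ q ∈ MS (V'.erase k),
              (∏ e ∈ q, ((z e.1 - z e.2)⁻¹) ^ 2)
                * (2 * Polynomial.eval (z j) (Q k)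
                    * Polynomial.eval (z j) (Polynomial.derivative (Q k))) := by
          rw [hThatdef, Polynomial.derivative_sum, Polynomial.eval_finset_sum]
          refine Finset.sum_congr rfl ?_
          intro k hk
          rw [Polynomial.derivative_sum, Polynomial.eval_finset_sum]
          refine Finset.sum_congr rfl ?_
          intro q hq
          rw [Polynomial.derivative_C_mul, Polynomial.eval_mul, Polynomial.eval_C]
          rw [Polynomial.derivative_pow]
          simp only [Polynomial.eval_mul, Polynomial.eval_C, Polynomial.eval_pow]
          norm_num
        rw [h0, ← Finset.add_sum_erase _ _ hj]
        have hrest : ∑ k ∈ V'.erase j, ∑ q ∈ MS (V'.erase k),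
            (∏ e ∈ q, ((z e.1 - z e.2)⁻¹) ^ 2)
              * (2 * Polynomial.eval (z j) (Q k)
                  * Polynomial.eval (z j) (Polynomial.derivative (Q k))) = 0 := by
          refine Finset.sum_eq_zero ?_
          intro k hk
          refine Finset.sum_eq_zero ?_
          intro q hq
          rw [hQother k (Finset.ne_of_mem_erase hk)]
          ring
        rw [hrest, add_zero, T, Finset.sum_mul]
      have hG1 : Polynomial.eval (z j) (Shat ^ 2 - That) = 0 := by
        rw [Polynomial.eval_sub, Polynomial.eval_pow, hevalS, hevalT]
        linear_combination (Dj ^ 2 * (S Wj z) ^ 2) * hε2 + Dj ^ 2 * hIHj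
      have hG2 : Polynomial.eval (z j) (Polynomial.derivative (Shat ^ 2 - That)) = 0 := by
        rw [Polynomial.derivative_sub, Polynomial.eval_sub, Polynomial.derivative_pow]
        simp only [Polynomial.eval_mul, Polynomial.eval_C, Polynomial.eval_pow, pow_one]
        rw [hevalS, hevalS', hevalT']
        push_cast
        linear_combination (2 * Dj * Polynomial.eval (z j) (Polynomial.derivative (Q j))
          * (S Wj z) ^ 2) * hε2
          + (2 * Dj * Polynomial.eval (z j) (Polynomial.derivative (Q j))) * hIHj
      exact sq_dvd_of_isRoot hG1 hG2
    have hGzero : Shat ^ 2 - That = 0 := by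
      by_contra hne0
      have hcop : (↑V' : Set ℕ).Pairwise (Function.onFun IsCoprime fun j => (X - C (z j)) ^ 2) := by
        intro i hi jj hjj hij
        have hzij : IsUnit (z i - z jj) := by
          refine isUnit_iff_ne_zero.2 ?_
          exact hzne i (hsubV' hi) jj (hsubV' hjj) hij
        exact (Polynomial.isCoprime_X_sub_C_of_isUnit_sub hzij).pow
      have hdvd := Finset.prod_dvd_of_coprime hcop (fun j hj => hdvdj j hj)
      have hdeg1 : (∏ j ∈ V', (X - C (z j)) ^ 2).natDegree = 2 * (2 * n + 1) := by
        rw [Polynomial.natDegree_prod _ _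
          (fun j _ => pow_ne_zero _ (Polynomial.X_sub_C_ne_zero _))]
        simp only [Polynomial.natDegree_pow, Polynomial.natDegree_X_sub_C, mul_one]
        rw [Finset.sum_const, hV'card, smul_eq_mul]
        ring
      have hle := Polynomial.natDegree_le_of_dvd hdvd hne0
      have hdeg2 : (Shat ^ 2 - That).natDegree ≤ 4 * n := by
        refine le_trans (Polynomial.natDegree_sub_le _ _) ?_
        refine max_le ?_ hTdeg
        rw [Polynomial.natDegree_pow]
        omega
      omega
    set D0 := ∏ l ∈ V', (z v0 - z l) with hD0def
    have hD00 : D0 ≠ 0 := by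
      refine Finset.prod_ne_zero_iff.2 ?_
      intro l hl
      exact hzne v0 hv0V l (hsubV' hl) (Finset.ne_of_mem_erase hl).symm
    have hQv0 : ∀ k ∈ V', Polynomial.eval (z v0) (Q k) = D0 * (z v0 - z k)⁻¹ := by
      intro k hk
      have h1 : (z v0 - z k) * ∏ l ∈ V'.erase k, (z v0 - z l) = D0 := by
        rw [hD0def]
        exact Finset.mul_prod_erase V' (fun l => z v0 - z l) hk
      have hne := hzne v0 hv0V k (hsubV' hk) (Finset.ne_of_mem_erase hk).symm
      rw [hQdef]
      rw [Polynomial.eval_prod]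
      simp only [Polynomial.eval_sub, Polynomial.eval_X, Polynomial.eval_C]
      rw [← h1, mul_comm (z v0 - z k), mul_assoc, mul_inv_cancel₀ hne, mul_one]
    have hfinS : Polynomial.eval (z v0) Shat = D0 * S V z := by
      have h0 : Polynomial.eval (z v0) Shat = ∑ k ∈ V', ∑ q ∈ MS (V'.erase k),
          (sgn (insert (v0, k) q) * ∏ e ∈ q, (z e.1 - z e.2)⁻¹)
            * Polynomial.eval (z v0) (Q k) := by
        rw [hShatdef, Polynomial.eval_finset_sum]
        refine Finset.sum_congr rfl ?_
        intro k hk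
        rw [Polynomial.eval_finset_sum]
        refine Finset.sum_congr rfl ?_
        intro q hq
        rw [Polynomial.eval_mul, Polynomial.eval_C]
      rw [h0, S, hpart z, Finset.mul_sum]
      refine Finset.sum_congr rfl ?_
      intro k hk
      rw [Finset.mul_sum]
      refine Finset.sum_congr rfl ?_
      intro q hq
      rw [hQv0 k hk]
      ring
    have hfinT : Polynomial.eval (z v0) That = D0 ^ 2 * T V z := by
      have h0 : Polynomial.eval (z v0) That = ∑ k ∈ V', ∑ q ∈ MS (V'.erase k),
          (∏ e ∈ q, ((z e.1 - z e.2)⁻¹) ^ 2) * (Polynomial.eval (z v0) (Q k)) ^ 2 := by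
        rw [hThatdef, Polynomial.eval_finset_sum]
        refine Finset.sum_congr rfl ?_
        intro k hk
        rw [Polynomial.eval_finset_sum]
        refine Finset.sum_congr rfl ?_
        intro q hq
        rw [Polynomial.eval_mul, Polynomial.eval_C, Polynomial.eval_pow]
      rw [h0, hpartT, Finset.mul_sum]
      refine Finset.sum_congr rfl ?_
      intro k hk
      rw [Finset.mul_sum]
      refine Finset.sum_congr rfl ?_
      intro q hq
      rw [hQv0 k hk]
      ring
    have heq : Shat ^ 2 = That := by
      have := hGzero
      rwa [sub_eq_zero] at this
    have hfinal : D0 ^ 2 * (S V z) ^ 2 = D0 ^ 2 * T V z := by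
      have h1 : Polynomial.eval (z v0) (Shat ^ 2) = Polynomial.eval (z v0) That := by
        rw [heq]
      rw [Polynomial.eval_pow, hfinS, hfinT] at h1
      rw [← h1]
      ring
    exact mul_left_cancel₀ (pow_ne_zero 2 hD00) hfinal

end
end PfSq
namespace PfSq
noncomputable section
open Finset Polynomial

variable {M : ℕ}

lemma emb_inj : Function.Injective (fun e : Fin (2*M) × Fin (2*M) => (e.1.val, e.2.val)) := by
  intro e f h
  simp only [Prod.mk.injEq] at h
  exact Prod.ext (Fin.val_injective h.1) (Fin.val_injective h.2)

lemma toNat_PM {p : Finset (Fin (2*M) × Fin (2*M))} (hp : IsPerfectMatching M p) :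
    PM (Finset.range (2*M)) (p.image (fun e => (e.1.val, e.2.val))) := by
  constructor
  · intro e' he'
    obtain ⟨e, he, rfl⟩ := Finset.mem_image.1 he'
    exact ⟨hp.1 e he, Finset.mem_range.2 e.1.isLt, Finset.mem_range.2 e.2.isLt⟩
  · intro i hi
    have hilt : i < 2*M := Finset.mem_range.1 hi
    obtain ⟨e, ⟨hep, hie⟩, hu⟩ := hp.2 ⟨i, hilt⟩
    refine ⟨(e.1.val, e.2.val), ⟨Finset.mem_image_of_mem _ hep, ?_⟩, ?_⟩
    · rcases hie with h | h
      · exact Or.inl (congrArg Fin.val h)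
      · exact Or.inr (congrArg Fin.val h)
    · rintro f' ⟨hf', hif'⟩
      obtain ⟨f, hf, rfl⟩ := Finset.mem_image.1 hf'
      have : f = e := by
        refine hu f ⟨hf, ?_⟩
        rcases hif' with h | h
        · exact Or.inl (Fin.ext h)
        · exact Or.inr (Fin.ext h)
      rw [this]

lemma toFin_PM (hM : 0 < 2*M) {p' : Finset (ℕ × ℕ)}
    (hp : PM (Finset.range (2*M)) p') :
    IsPerfectMatching M (p'.image
      (fun e => ((⟨e.1 % (2*M), Nat.mod_lt _ hM⟩ : Fin (2*M)),
                 (⟨e.2 % (2*M), Nat.mod_lt _ hM⟩ : Fin (2*M))))) := by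
  have hbound : ∀ e ∈ p', e.1 < 2*M ∧ e.2 < 2*M := by
    intro e he
    obtain ⟨_, h1, h2⟩ := hp.1 e he
    exact ⟨Finset.mem_range.1 h1, Finset.mem_range.1 h2⟩
  constructor
  · intro e' he'
    obtain ⟨e, he, rfl⟩ := Finset.mem_image.1 he'
    have hb := hbound e he
    have hord := (hp.1 e he).1
    show (⟨e.1 % (2*M), _⟩ : Fin (2*M)) < ⟨e.2 % (2*M), _⟩
    simp only [Fin.mk_lt_mk]
    rw [Nat.mod_eq_of_lt hb.1, Nat.mod_eq_of_lt hb.2]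
    exact hord
  · intro i
    have hiv : (i : ℕ) ∈ Finset.range (2*M) := Finset.mem_range.2 i.isLt
    obtain ⟨e, ⟨hep, hie⟩, hu⟩ := hp.2 i.val hiv
    have hb := hbound e hep
    refine ⟨(⟨e.1 % (2*M), Nat.mod_lt _ hM⟩, ⟨e.2 % (2*M), Nat.mod_lt _ hM⟩),
      ⟨Finset.mem_image_of_mem _ hep, ?_⟩, ?_⟩
    · rcases hie with h | h
      · refine Or.inl (Fin.ext ?_)
        simp [Nat.mod_eq_of_lt hb.1, h]
      · refine Or.inr (Fin.ext ?_)
        simp [Nat.mod_eq_of_lt hb.2, h]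
    · rintro f' ⟨hf', hif'⟩
      obtain ⟨f, hf, rfl⟩ := Finset.mem_image.1 hf'
      have hbf := hbound f hf
      have : f = e := by
        refine hu f ⟨hf, ?_⟩
        rcases hif' with h | h
        · have := congrArg Fin.val h
          simp only at this
          rw [Nat.mod_eq_of_lt hbf.1] at this
          exact Or.inl this
        · have := congrArg Fin.val h
          simp only at this
          rw [Nat.mod_eq_of_lt hbf.2] at this
          exact Or.inr this
      rw [this]

lemma crossingNumber_eq {p : Finset (Fin (2*M) × Fin (2*M))} :
    crossingNumber M p = cross (p.image (fun e => (e.1.val, e.2.val))) := by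
  rw [crossingNumber, Finset.card_filter, Finset.sum_product, cross]
  rw [Finset.sum_image (fun a _ b _ h => emb_inj h)]
  refine Finset.sum_congr rfl ?_
  intro e he
  rw [Finset.sum_image (fun a _ b _ h => emb_inj h)]
  refine Finset.sum_congr rfl ?_
  intro f hf
  rw [xi]
  rfl

end
end PfSq
namespace PfSq
noncomputable section
open Finset Polynomial

theorem stmt0' (M : ℕ) (hM : 1 ≤ M) (z : Fin (2*M) → ℂ)
    (hz : Function.Injective z) :
    (∑ p ∈ Finset.univ.filter (IsPerfectMatching M),
        (-1 : ℂ) ^ (crossingNumber M p) * ∏ e ∈ p, (z e.1 - z e.2)⁻¹) ^ 2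
      = ∑ p ∈ Finset.univ.filter (IsPerfectMatching M),
          ∏ e ∈ p, ((z e.1 - z e.2)⁻¹) ^ 2 := by
  classical
  have h2M : 0 < 2*M := by omega
  set zn : ℕ → ℂ := fun i => if h : i < 2*M then z ⟨i, h⟩ else 0 with hzn
  have hinj : Set.InjOn zn ↑(Finset.range (2*M)) := by
    intro a ha b hb hab
    simp only [Finset.coe_range, Set.mem_Iio] at ha hb
    rw [hzn] at hab
    simp only [dif_pos ha, dif_pos hb] at hab
    have := hz hab
    simpa using congrArg Fin.val this
  have hleft : ∀ p : Finset (Fin (2*M) × Fin (2*M)),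
      (p.image (fun e => (e.1.val, e.2.val))).image
        (fun e => ((⟨e.1 % (2*M), Nat.mod_lt _ h2M⟩ : Fin (2*M)),
                   (⟨e.2 % (2*M), Nat.mod_lt _ h2M⟩ : Fin (2*M)))) = p := by
    intro p
    rw [Finset.image_image]
    have : ∀ e ∈ p, ((fun e : ℕ × ℕ => ((⟨e.1 % (2*M), Nat.mod_lt _ h2M⟩ : Fin (2*M)),
        (⟨e.2 % (2*M), Nat.mod_lt _ h2M⟩ : Fin (2*M)))) ∘ (fun e => (e.1.val, e.2.val))) e
        = id e := by
      intro e he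
      simp only [Function.comp_apply, id_eq]
      refine Prod.ext (Fin.ext ?_) (Fin.ext ?_)
      · simp [Nat.mod_eq_of_lt e.1.isLt]
      · simp [Nat.mod_eq_of_lt e.2.isLt]
    rw [Finset.image_congr this, Finset.image_id]
  have hright : ∀ p' ∈ MS (Finset.range (2*M)),
      (p'.image (fun e => ((⟨e.1 % (2*M), Nat.mod_lt _ h2M⟩ : Fin (2*M)),
                   (⟨e.2 % (2*M), Nat.mod_lt _ h2M⟩ : Fin (2*M))))).image
        (fun e => (e.1.val, e.2.val)) = p' := by
    intro p' hp'
    have hbound : ∀ e ∈ p', e.1 < 2*M ∧ e.2 < 2*M := by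
      intro e he
      obtain ⟨_, h1, h2⟩ := (mem_MS.1 hp').1 e he
      exact ⟨Finset.mem_range.1 h1, Finset.mem_range.1 h2⟩
    rw [Finset.image_image]
    have : ∀ e ∈ p', ((fun e : Fin (2*M) × Fin (2*M) => (e.1.val, e.2.val)) ∘
        (fun e : ℕ × ℕ => ((⟨e.1 % (2*M), Nat.mod_lt _ h2M⟩ : Fin (2*M)),
          (⟨e.2 % (2*M), Nat.mod_lt _ h2M⟩ : Fin (2*M))))) e = id e := by
      intro e he
      have hb := hbound e he
      simp only [Function.comp_apply, id_eq]
      exact Prod.ext (Nat.mod_eq_of_lt hb.1) (Nat.mod_eq_of_lt hb.2)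
    rw [Finset.image_congr this, Finset.image_id]
  have hprod : ∀ p : Finset (Fin (2*M) × Fin (2*M)),
      ∏ e ∈ p.image (fun e => (e.1.val, e.2.val)), (zn e.1 - zn e.2)⁻¹
        = ∏ e ∈ p, (z e.1 - z e.2)⁻¹ := by
    intro p
    rw [Finset.prod_image (fun a _ b _ h => emb_inj h)]
    refine Finset.prod_congr rfl ?_
    intro e he
    rw [hzn]
    simp only [dif_pos e.1.isLt, dif_pos e.2.isLt, Fin.eta]
  have hprod2 : ∀ p : Finset (Fin (2*M) × Fin (2*M)),
      ∏ e ∈ p.image (fun e => (e.1.val, e.2.val)), ((zn e.1 - zn e.2)⁻¹) ^ 2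
        = ∏ e ∈ p, ((z e.1 - z e.2)⁻¹) ^ 2 := by
    intro p
    rw [Finset.prod_image (fun a _ b _ h => emb_inj h)]
    refine Finset.prod_congr rfl ?_
    intro e he
    rw [hzn]
    simp only [dif_pos e.1.isLt, dif_pos e.2.isLt, Fin.eta]
  have hS : (∑ p ∈ Finset.univ.filter (IsPerfectMatching M),
      (-1 : ℂ) ^ (crossingNumber M p) * ∏ e ∈ p, (z e.1 - z e.2)⁻¹)
      = S (Finset.range (2*M)) zn := by
    rw [S]
    refine Finset.sum_nbij' (fun p => p.image (fun e => (e.1.val, e.2.val)))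
      (fun p' => p'.image (fun e => ((⟨e.1 % (2*M), Nat.mod_lt _ h2M⟩ : Fin (2*M)),
        (⟨e.2 % (2*M), Nat.mod_lt _ h2M⟩ : Fin (2*M))))) ?_ ?_ ?_ ?_ ?_
    · intro p hp
      exact mem_MS.2 (toNat_PM (Finset.mem_filter.1 hp).2)
    · intro p' hp'
      exact Finset.mem_filter.2 ⟨Finset.mem_univ _, toFin_PM h2M (mem_MS.1 hp')⟩
    · intro p hp
      exact hleft p
    · intro p' hp'
      exact hright p' hp'
    · intro p hp
      rw [sgn, ← crossingNumber_eq, hprod p]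
  have hT : (∑ p ∈ Finset.univ.filter (IsPerfectMatching M),
      ∏ e ∈ p, ((z e.1 - z e.2)⁻¹) ^ 2) = T (Finset.range (2*M)) zn := by
    rw [T]
    refine Finset.sum_nbij' (fun p => p.image (fun e => (e.1.val, e.2.val)))
      (fun p' => p'.image (fun e => ((⟨e.1 % (2*M), Nat.mod_lt _ h2M⟩ : Fin (2*M)),
        (⟨e.2 % (2*M), Nat.mod_lt _ h2M⟩ : Fin (2*M))))) ?_ ?_ ?_ ?_ ?_
    · intro p hp
      exact mem_MS.2 (toNat_PM (Finset.mem_filter.1 hp).2)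
    · intro p' hp'
      exact Finset.mem_filter.2 ⟨Finset.mem_univ _, toFin_PM h2M (mem_MS.1 hp')⟩
    · intro p hp
      exact hleft p
    · intro p' hp'
      exact hright p' hp'
    · intro p hp
      rw [hprod2 p]
  rw [hS, hT]
  exact S_sq_eq_T M (Finset.range (2*M)) (Finset.card_range _) zn hinj

end
end PfSq


theorem stmt0 (M : ℕ) (hM : 1 ≤ M) (z : Fin (2*M) → ℂ)
    (hz : Function.Injective z) :
    (∑ p ∈ Finset.univ.filter (IsPerfectMatching M),
        (-1 : ℂ) ^ (crossingNumber M p) * ∏ e ∈ p, (z e.1 - z e.2)⁻¹) ^ 2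
      = ∑ p ∈ Finset.univ.filter (IsPerfectMatching M),
          ∏ e ∈ p, ((z e.1 - z e.2)⁻¹) ^ 2 := by
  exact PfSq.stmt0' M hM z hz
end

section
/- Let p be a perfect matching of {1, …, 2M} with pairs {a_1, b_1}, …, {a_M, b_M} normalized so that a_i < b_i for each i and a_1 < a_2 < … < a_M, and let σ_p be the permutation of {1, …, 2M} defined by σ_p(2i−1) = a_i and σ_p(2i) = b_i. Then the sign of σ_p equals (−1)^{c(p)}, where c(p) is the crossing number of p. -/
open scoped BigOperators

/-- The crossing number of the matching with pairs `{a i, b i}`: the number of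
pairs of indices `(i, j)` with `a i < a j < b i < b j`. -/
def crossingCount (M : ℕ) (a b : Fin M → Fin (2*M)) : ℕ :=
  (Finset.univ.filter (fun ij : Fin M × Fin M =>
      a ij.1 < a ij.2 ∧ a ij.2 < b ij.1 ∧ b ij.1 < b ij.2)).card

section Aux
open Finset

/-- The sign of a permutation of `Fin n` is `(-1)` to the number of inversions. -/
lemma sign_eq_pow_inversions {n : ℕ} (hn : 2 ≤ n) (σ : Equiv.Perm (Fin n)) :
    (Equiv.Perm.sign σ : ℤ) =
      (-1) ^ ((Equiv.Perm.finPairsLT n).filter (fun x => σ x.1 < σ x.2)).card := by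
  have hsurj : Function.Surjective
      (MonoidHom.mk' (Equiv.Perm.signAux (n := n)) Equiv.Perm.signAux_mul) := by
    intro u
    rcases Int.units_eq_one_or u with h | h
    · exact ⟨1, by simp [h]⟩
    · refine ⟨Equiv.swap ⟨0, by omega⟩ ⟨1, by omega⟩, ?_⟩
      have : (⟨0, by omega⟩ : Fin n) ≠ ⟨1, by omega⟩ := by simp [Fin.ext_iff]
      simpa [h] using Equiv.Perm.signAux_swap this
  have h1 : Equiv.Perm.sign σ = Equiv.Perm.signAux σ := by
    rw [← Equiv.Perm.eq_sign_of_surjective_hom hsurj]; rfl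
  rw [h1]
  unfold Equiv.Perm.signAux
  rw [← Units.coeHom_apply, map_prod]
  have : ∀ x ∈ Equiv.Perm.finPairsLT n,
      (Units.coeHom ℤ) (if σ x.1 ≤ σ x.2 then (-1 : ℤˣ) else 1)
        = if σ x.1 < σ x.2 then (-1 : ℤ) else 1 := by
    intro x hx
    have hne : σ x.1 ≠ σ x.2 := fun h =>
      (Equiv.Perm.mem_finPairsLT.1 hx).ne (σ.injective h).symm
    rcases lt_or_ge (σ x.1) (σ x.2) with h | h
    · rw [if_pos h.le, if_pos h]; rfl
    · rw [if_neg (fun h' => hne (le_antisymm h' h)),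
        if_neg (fun h' => hne (le_antisymm h'.le h))]; rfl
  rw [Finset.prod_congr rfl this, Finset.prod_ite, Finset.prod_const, Finset.prod_const,
    one_pow, mul_one]

/-- Inversions whose larger position is even correspond to pairs `i < j` with `a j < b i`. -/
lemma card_invE {M : ℕ} (a b : Fin M → Fin (2*M))
    (ha : StrictMono a)
    (σ : Equiv.Perm (Fin (2*M)))
    (hσa : ∀ i : Fin M, σ ⟨2 * i.1, (by have := i.isLt; omega : 2 * i.1 + 0 < 2 * M)⟩ = a i)
    (hσb : ∀ i : Fin M, σ ⟨2 * i.1 + 1, (by have := i.isLt; omega : 2 * i.1 + 1 + 0 < 2 * M)⟩ = b i) :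
    (((Equiv.Perm.finPairsLT (2*M)).filter (fun x => σ x.1 < σ x.2)).filter
        (fun x => x.1.1 % 2 = 0)).card
      = (univ.filter (fun ij : Fin M × Fin M =>
          ij.1 < ij.2 ∧ a ij.2 < b ij.1)).card := by
  refine (Finset.card_bij (fun ij _ =>
      (⟨⟨2 * ij.2.1, by have := ij.2.isLt; omega⟩,
        ⟨2 * ij.1.1 + 1, by have := ij.1.isLt; omega⟩⟩ : Σ _ : Fin (2*M), Fin (2*M)))
      ?_ ?_ ?_).symm
  · rintro ⟨i, j⟩ hij
    simp only [mem_filter, mem_univ, true_and] at hij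
    obtain ⟨h1, h2⟩ := hij
    simp only [mem_filter, Equiv.Perm.mem_finPairsLT]
    refine ⟨⟨?_, ?_⟩, ?_⟩
    · simp only [Fin.lt_iff_val_lt_val]
      have : i.1 < j.1 := h1
      omega
    · rw [hσa, hσb]; exact h2
    · omega
  · intro p hp q hq h
    obtain ⟨i, j⟩ := p
    obtain ⟨i', j'⟩ := q
    simp only [Sigma.mk.inj_iff, Fin.ext_iff, heq_eq_eq] at h
    have h1 : i = i' := by ext; omega
    have h2 : j = j' := by ext; omega
    rw [h1, h2]
  · rintro ⟨x, y⟩ hx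
    simp only [mem_filter, Equiv.Perm.mem_finPairsLT] at hx
    obtain ⟨⟨hlt, hinv⟩, hpar⟩ := hx
    have hx2 : x.1 < 2 * M := x.isLt
    have hy2 : y.1 < 2 * M := y.isLt
    obtain ⟨j, hxj⟩ : ∃ j : Fin M, x = ⟨2 * j.1, by have := j.isLt; omega⟩ :=
      ⟨⟨x.1 / 2, by omega⟩, by ext; simp; omega⟩
    have hxval : x.1 = 2 * j.1 := by rw [hxj]
    have hltv : y.1 < x.1 := hlt
    have hy : y.1 % 2 = 1 := by
      by_contra h
      have hy0 : y.1 % 2 = 0 := by omega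
      obtain ⟨i, hyi⟩ : ∃ i : Fin M, y = ⟨2 * i.1, by have := i.isLt; omega⟩ :=
        ⟨⟨y.1 / 2, by omega⟩, by ext; simp; omega⟩
      have hyval : y.1 = 2 * i.1 := by rw [hyi]
      have hij : i < j := by simp only [Fin.lt_iff_val_lt_val]; omega
      have : a j < a i := by rw [hxj, hyi] at hinv; rw [hσa j, hσa i] at hinv; exact hinv
      exact absurd (ha hij) (not_lt.2 this.le)
    obtain ⟨i, hyi⟩ : ∃ i : Fin M, y = ⟨2 * i.1 + 1, by have := i.isLt; omega⟩ :=
      ⟨⟨y.1 / 2, by omega⟩, by ext; simp; omega⟩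
    have hyval : y.1 = 2 * i.1 + 1 := by rw [hyi]
    refine ⟨(i, j), ?_, ?_⟩
    · simp only [mem_filter, mem_univ, true_and]
      constructor
      · simp only [Fin.lt_iff_val_lt_val]; omega
      · rw [hxj, hyi] at hinv; rw [hσa j, hσb i] at hinv; exact hinv
    · show (⟨⟨2 * j.1, _⟩, ⟨2 * i.1 + 1, _⟩⟩ : Σ _ : Fin (2*M), Fin (2*M)) = ⟨x, y⟩
      rw [hxj, hyi]

/-- Inversions whose larger position is odd correspond to pairs `i < j` with `b j < b i`. -/
lemma card_invO {M : ℕ} (a b : Fin M → Fin (2*M))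
    (hab : ∀ i, a i < b i) (ha : StrictMono a)
    (σ : Equiv.Perm (Fin (2*M)))
    (hσa : ∀ i : Fin M, σ ⟨2 * i.1, (by have := i.isLt; omega : 2 * i.1 + 0 < 2 * M)⟩ = a i)
    (hσb : ∀ i : Fin M, σ ⟨2 * i.1 + 1, (by have := i.isLt; omega : 2 * i.1 + 1 + 0 < 2 * M)⟩ = b i) :
    (((Equiv.Perm.finPairsLT (2*M)).filter (fun x => σ x.1 < σ x.2)).filter
        (fun x => ¬ x.1.1 % 2 = 0)).card
      = (univ.filter (fun ij : Fin M × Fin M =>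
          ij.1 < ij.2 ∧ b ij.2 < b ij.1)).card := by
  refine (Finset.card_bij (fun ij _ =>
      (⟨⟨2 * ij.2.1 + 1, by have := ij.2.isLt; omega⟩,
        ⟨2 * ij.1.1 + 1, by have := ij.1.isLt; omega⟩⟩ : Σ _ : Fin (2*M), Fin (2*M)))
      ?_ ?_ ?_).symm
  · rintro ⟨i, j⟩ hij
    simp only [mem_filter, mem_univ, true_and] at hij
    obtain ⟨h1, h2⟩ := hij
    simp only [mem_filter, Equiv.Perm.mem_finPairsLT]
    refine ⟨⟨?_, ?_⟩, ?_⟩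
    · simp only [Fin.lt_iff_val_lt_val]
      have : i.1 < j.1 := h1
      omega
    · rw [hσb, hσb]; exact h2
    · omega
  · intro p hp q hq h
    obtain ⟨i, j⟩ := p
    obtain ⟨i', j'⟩ := q
    simp only [Sigma.mk.inj_iff, Fin.ext_iff, heq_eq_eq] at h
    have h1 : i = i' := by ext; omega
    have h2 : j = j' := by ext; omega
    rw [h1, h2]
  · rintro ⟨x, y⟩ hx
    simp only [mem_filter, Equiv.Perm.mem_finPairsLT] at hx
    obtain ⟨⟨hlt, hinv⟩, hpar⟩ := hx
    have hx2 : x.1 < 2 * M := x.isLt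
    have hy2 : y.1 < 2 * M := y.isLt
    have hxodd : x.1 % 2 = 1 := by omega
    obtain ⟨j, hxj⟩ : ∃ j : Fin M, x = ⟨2 * j.1 + 1, by have := j.isLt; omega⟩ :=
      ⟨⟨x.1 / 2, by omega⟩, by ext; simp; omega⟩
    have hxval : x.1 = 2 * j.1 + 1 := by rw [hxj]
    have hltv : y.1 < x.1 := hlt
    have hy : y.1 % 2 = 1 := by
      by_contra h
      have hy0 : y.1 % 2 = 0 := by omega
      obtain ⟨i, hyi⟩ : ∃ i : Fin M, y = ⟨2 * i.1, by have := i.isLt; omega⟩ :=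
        ⟨⟨y.1 / 2, by omega⟩, by ext; simp; omega⟩
      have hyval : y.1 = 2 * i.1 := by rw [hyi]
      have hij : i ≤ j := by simp only [Fin.le_iff_val_le_val]; omega
      have hba : b j < a i := by
        rw [hxj, hyi] at hinv; rw [hσb j, hσa i] at hinv; exact hinv
      have : a i ≤ a j := ha.monotone hij
      exact absurd ((hab j).trans_le (hba.le.trans this)) (lt_irrefl _)
    obtain ⟨i, hyi⟩ : ∃ i : Fin M, y = ⟨2 * i.1 + 1, by have := i.isLt; omega⟩ :=
      ⟨⟨y.1 / 2, by omega⟩, by ext; simp; omega⟩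
    have hyval : y.1 = 2 * i.1 + 1 := by rw [hyi]
    refine ⟨(i, j), ?_, ?_⟩
    · simp only [mem_filter, mem_univ, true_and]
      constructor
      · simp only [Fin.lt_iff_val_lt_val]; omega
      · rw [hxj, hyi] at hinv; rw [hσb j, hσb i] at hinv; exact hinv
    · show (⟨⟨2 * j.1 + 1, _⟩, ⟨2 * i.1 + 1, _⟩⟩ : Σ _ : Fin (2*M), Fin (2*M)) = ⟨x, y⟩
      rw [hxj, hyi]

end Aux

/-- If `p` is a perfect matching of `{1, …, 2M}` with pairs `{a i, b i}`,
normalized so that `a i < b i` and `a` is strictly increasing, and `σ` is the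
permutation sending (in 0-indexed notation) `2*i ↦ a i` and `2*i + 1 ↦ b i`,
then `sign σ = (-1) ^ (crossing number of p)`. -/
theorem stmt1 (M : ℕ) (a b : Fin M → Fin (2*M))
    (hab : ∀ i, a i < b i) (ha : StrictMono a)
    (σ : Equiv.Perm (Fin (2*M)))
    (hσa : ∀ i : Fin M, σ ⟨2 * i.1, by have := i.isLt; omega⟩ = a i)
    (hσb : ∀ i : Fin M, σ ⟨2 * i.1 + 1, by have := i.isLt; omega⟩ = b i) :
    (Equiv.Perm.sign σ : ℤ) = (-1) ^ (crossingCount M a b) := by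
  classical
  rcases Nat.eq_zero_or_pos M with hM | hM
  · subst hM
    have hσ1 : σ = 1 := by
      ext k
      exact absurd k.isLt (by omega)
    have hc : crossingCount 0 a b = 0 := by
      rw [crossingCount, Finset.card_eq_zero]
      apply Finset.eq_empty_of_forall_notMem
      intro ij
      exact absurd ij.1.isLt (by omega)
    rw [hσ1, hc]
    simp
  open Finset in
  have key := sign_eq_pow_inversions (n := 2*M) (by omega) σ
  rw [key]
  -- split the inversion set by parity of the larger position
  rw [← Finset.card_filter_add_card_filter_not
    (s := (Equiv.Perm.finPairsLT (2*M)).filter (fun x => σ x.1 < σ x.2))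
    (p := fun x => x.1.1 % 2 = 0)]
  rw [card_invE a b ha σ hσa hσb, card_invO a b hab ha σ hσa hσb]
  -- now relate the two pair-counts to the crossing number
  have hbinj : ∀ i j : Fin M, i < j → b i ≠ b j := by
    intro i j hij h
    have h1 : σ ⟨2 * i.1 + 1, by have := i.isLt; omega⟩
        = σ ⟨2 * j.1 + 1, by have := j.isLt; omega⟩ := by
      rw [hσb, hσb, h]
    have := σ.injective h1
    have h2 : 2 * i.1 + 1 = 2 * j.1 + 1 := congrArg Fin.val this
    have : i.1 < j.1 := hij
    omega
  have hS1 : (Finset.univ.filter (fun ij : Fin M × Fin M =>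
        ij.1 < ij.2 ∧ a ij.2 < b ij.1))
      = (Finset.univ.filter (fun ij : Fin M × Fin M =>
          ij.1 < ij.2 ∧ a ij.2 < b ij.1 ∧ b ij.1 < b ij.2))
        ∪ (Finset.univ.filter (fun ij : Fin M × Fin M =>
          ij.1 < ij.2 ∧ b ij.2 < b ij.1)) := by
    ext ij
    simp only [Finset.mem_filter, Finset.mem_union, Finset.mem_univ, true_and]
    constructor
    · rintro ⟨hij, hlt⟩
      rcases lt_trichotomy (b ij.1) (b ij.2) with h | h | h
      · exact Or.inl ⟨hij, hlt, h⟩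
      · exact absurd h (hbinj _ _ hij)
      · exact Or.inr ⟨hij, h⟩
    · rintro (⟨hij, hlt, _⟩ | ⟨hij, hlt⟩)
      · exact ⟨hij, hlt⟩
      · exact ⟨hij, (hab ij.2).trans hlt⟩
  have hdisj : Disjoint
      (Finset.univ.filter (fun ij : Fin M × Fin M =>
          ij.1 < ij.2 ∧ a ij.2 < b ij.1 ∧ b ij.1 < b ij.2))
      (Finset.univ.filter (fun ij : Fin M × Fin M =>
          ij.1 < ij.2 ∧ b ij.2 < b ij.1)) := by
    rw [Finset.disjoint_left]
    intro ij h1 h2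
    simp only [Finset.mem_filter] at h1 h2
    exact absurd (h1.2.2.2.trans h2.2.2) (lt_irrefl _)
  have hcross : crossingCount M a b
      = (Finset.univ.filter (fun ij : Fin M × Fin M =>
          ij.1 < ij.2 ∧ a ij.2 < b ij.1 ∧ b ij.1 < b ij.2)).card := by
    rw [crossingCount]
    congr 1
    apply Finset.filter_congr
    intro ij _
    rw [ha.lt_iff_lt]
  rw [hS1, Finset.card_union_of_disjoint hdisj, hcross]
  rw [pow_add, pow_add, mul_assoc, ← pow_add]
  rw [Even.neg_one_pow ⟨_, rfl⟩, mul_one]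
end

section
/- Let τ be a symmetric g×g complex matrix whose real part is negative definite. Then for every z ∈ ℂ^g, the family m ↦ exp(4 Q_τ(m) + 2 m·z), indexed by m ∈ ℤ^g, is (absolutely) summable. -/
set_option maxHeartbeats 1000000

open scoped BigOperators
open Real

/-- `Q_τ(m) = (1/4) Σ_{i,j} τ_{ij} m_i m_j`. -/
noncomputable def thetaQ {g : ℕ} (τ : Matrix (Fin g) (Fin g) ℂ) (m : Fin g → ℂ) : ℂ :=
  (1/4) * ∑ i, ∑ j, τ i j * m i * m j

/-- The real part of `τ` is negative definite. -/
def ReNegDef {g : ℕ} (τ : Matrix (Fin g) (Fin g) ℂ) : Prop :=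
  ∀ x : Fin g → ℝ, x ≠ 0 → ∑ i, ∑ j, (τ i j).re * x i * x j < 0


lemma summable_gauss_int (c b : ℝ) (hc : 0 < c) :
    Summable (fun n : ℤ => Real.exp (-c * (n : ℝ) ^ 2 + b * |(n : ℝ)|)) := by
  have h := summable_pow_mul_jacobiTheta₂_term_bound (b / (2 * π)) (T := c / π) (by positivity) 0
  refine h.congr fun n => ?_
  rw [pow_zero, one_mul]
  congr 1
  have hπ : (π : ℝ) ≠ 0 := Real.pi_ne_zero
  field_simp
  rw [Int.cast_abs]
  ring

lemma summable_pi_prod : ∀ {g : ℕ} (f : Fin g → ℤ → ℝ), (∀ i, Summable (f i)) →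
    (∀ i n, 0 ≤ f i n) → Summable (fun m : Fin g → ℤ => ∏ i, f i (m i)) := by
  intro g
  induction g with
  | zero => intro f _ _; exact Summable.of_finite
  | succ g ih =>
    intro f hf hnn
    have key : Summable (fun p : ℤ × (Fin g → ℤ) =>
        f 0 p.1 * ∏ i : Fin g, f i.succ (p.2 i)) := by
      have h2 := ih (fun i => f i.succ) (fun i => hf i.succ) (fun i n => hnn _ _)
      have h := Summable.mul_of_nonneg (hf 0) h2 (fun n => hnn 0 n)
        (fun m => Finset.prod_nonneg fun i _ => hnn _ _)
      exact h
    refine ((Fin.consEquiv fun _ : Fin (g + 1) => ℤ).summable_iff).mp ?_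
    have hcomp : ((fun m : Fin (g + 1) → ℤ => ∏ i, f i (m i)) ∘
        (Fin.consEquiv fun _ : Fin (g + 1) => ℤ)) = fun p : ℤ × (Fin g → ℤ) =>
        f 0 p.1 * ∏ i : Fin g, f i.succ (p.2 i) := by
      funext p
      simp only [Function.comp_apply, Fin.consEquiv_apply, Fin.prod_univ_succ,
        Fin.cons_zero, Fin.cons_succ]
    rw [hcomp]
    exact key

lemma reNegDef_bound {g : ℕ} (τ : Matrix (Fin g) (Fin g) ℂ) (hneg : (∀ x : Fin g → ℝ, x ≠ 0 → ∑ i, ∑ j, (τ i j).re * x i * x j < 0)) :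
    ∃ c : ℝ, 0 < c ∧ ∀ x : Fin g → ℝ,
      ∑ i, ∑ j, (τ i j).re * x i * x j ≤ -c * ∑ i, x i ^ 2 := by
  rcases Nat.eq_zero_or_pos g with hg | hg
  · subst hg; exact ⟨1, one_pos, fun x => by simp⟩
  have hne : Nonempty (Fin g) := ⟨⟨0, hg⟩⟩
  set f : (Fin g → ℝ) → ℝ := fun x => ∑ i, ∑ j, (τ i j).re * x i * x j with hfdef
  have hcont : Continuous f := by
    apply continuous_finset_sum _ fun i _ => continuous_finset_sum _ fun j _ => ?_
    exact (continuous_const.mul (continuous_apply i)).mul (continuous_apply j)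
  have hcont2 : Continuous fun x : Fin g → ℝ => ∑ i, x i ^ 2 :=
    continuous_finset_sum _ fun i _ => (continuous_apply i).pow 2
  set S : Set (Fin g → ℝ) := {x | ∑ i, x i ^ 2 = 1} with hSdef
  have hclosed : IsClosed S := isClosed_eq hcont2 continuous_const
  have hbdd : Bornology.IsBounded S := by
    refine (Metric.isBounded_closedBall (x := (0 : Fin g → ℝ)) (r := 1)).subset fun x hx => ?_
    rw [Metric.mem_closedBall, dist_zero_right]
    refine pi_norm_le_iff_of_nonneg zero_le_one |>.mpr fun i => ?_
    rw [Real.norm_eq_abs, ← sq_le_one_iff_abs_le_one]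
    calc x i ^ 2 ≤ ∑ j, x j ^ 2 :=
          Finset.single_le_sum (fun j _ => sq_nonneg (x j)) (Finset.mem_univ i)
      _ = 1 := hx
  have hSc : IsCompact S := Metric.isCompact_of_isClosed_isBounded hclosed hbdd
  have hSne : S.Nonempty := by
    refine ⟨Pi.single ⟨0, hg⟩ 1, ?_⟩
    simp [hSdef, Pi.single_apply, sq, ite_mul, Finset.sum_ite_eq']
  obtain ⟨x0, hx0S, hx0max⟩ := hSc.exists_isMaxOn hSne hcont.continuousOn
  have hx0ne : x0 ≠ 0 := by
    intro h
    rw [hSdef] at hx0S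
    simp only [Set.mem_setOf_eq, h] at hx0S
    simp at hx0S
  have hx0neg : f x0 < 0 := hneg x0 hx0ne
  refine ⟨-f x0, by linarith, fun x => ?_⟩
  rw [neg_neg]
  set s := ∑ i, x i ^ 2 with hsdef
  have hs0 : 0 ≤ s := Finset.sum_nonneg fun i _ => sq_nonneg _
  rcases eq_or_lt_of_le hs0 with h0 | hpos
  · have hx : ∀ i, x i = 0 := by
      intro i
      have h := (Finset.sum_eq_zero_iff_of_nonneg (fun j _ => sq_nonneg (x j))).mp h0.symm i
        (Finset.mem_univ i)
      exact pow_eq_zero_iff two_ne_zero |>.mp h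
    have hfx : f x = 0 :=
      Finset.sum_eq_zero fun i _ => Finset.sum_eq_zero fun j _ => by rw [hx i]; ring
    show f x ≤ f x0 * s
    rw [hfx, ← h0, mul_zero]
  · set r := Real.sqrt s with hrdef
    have hr : 0 < r := Real.sqrt_pos.mpr hpos
    have hrr : r * r = s := Real.mul_self_sqrt hs0
    have hy : (fun i => x i / r) ∈ S := by
      rw [hSdef]
      simp only [Set.mem_setOf_eq, div_pow]
      rw [← Finset.sum_div, ← hsdef, sq, hrr]
      exact div_self hpos.ne'
    have hle : f (fun i => x i / r) ≤ f x0 := hx0max hy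
    have hfy : f (fun i => x i / r) = f x / s := by
      rw [hfdef, Finset.sum_div]
      refine Finset.sum_congr rfl fun i _ => ?_
      rw [Finset.sum_div]
      refine Finset.sum_congr rfl fun j _ => ?_
      rw [← hrr]
      field_simp
      try ring
    rw [hfy, div_le_iff₀ hpos] at hle
    show f x ≤ f x0 * s
    linarith


theorem stmt2 {g : ℕ} (τ : Matrix (Fin g) (Fin g) ℂ) (hsym : τ.IsSymm)
    (hneg : ReNegDef τ) (z : Fin g → ℂ) :
    Summable (fun m : Fin g → ℤ =>
      Complex.exp (4 * thetaQ τ (fun i => (m i : ℂ)) + 2 * ∑ i, (m i : ℂ) * z i)) := by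
  obtain ⟨c, hc, hbound⟩ := reNegDef_bound τ hneg
  have hfs : ∀ i : Fin g, Summable (fun n : ℤ =>
      Real.exp (-c * (n : ℝ) ^ 2 + (2 * |(z i).re|) * |(n : ℝ)|)) :=
    fun i => summable_gauss_int c _ hc
  have hprod := summable_pi_prod _ hfs (fun i n => (Real.exp_pos _).le)
  refine hprod.of_norm_bounded fun m => ?_
  rw [Complex.norm_exp, ← Real.exp_sum]
  refine Real.exp_le_exp.mpr ?_
  have hre : (4 * thetaQ τ (fun i => (m i : ℂ)) + 2 * ∑ i, (m i : ℂ) * z i).re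
      = (∑ i, ∑ j, (τ i j).re * ((m i : ℝ)) * ((m j : ℝ))) + 2 * ∑ i, (m i : ℝ) * (z i).re := by
    have h4 : 4 * thetaQ τ (fun i => (m i : ℂ)) = ∑ i, ∑ j, τ i j * (m i : ℂ) * (m j : ℂ) := by
      rw [thetaQ]; ring
    rw [h4]
    simp [Complex.add_re, Complex.re_sum, Complex.mul_re, Complex.mul_im]
  rw [hre]
  have h1 := hbound fun i => (m i : ℝ)
  have h2 : 2 * ∑ i, (m i : ℝ) * (z i).re ≤ ∑ i, (2 * |(z i).re|) * |(m i : ℝ)| := by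
    rw [Finset.mul_sum]
    refine Finset.sum_le_sum fun i _ => ?_
    calc 2 * ((m i : ℝ) * (z i).re) ≤ 2 * (|(m i : ℝ)| * |(z i).re|) := by
          have := le_abs_self ((m i : ℝ) * (z i).re)
          rw [abs_mul] at this; linarith
      _ = 2 * |(z i).re| * |(m i : ℝ)| := by ring
  have h3 : ∑ i, (-c * (m i : ℝ) ^ 2 + (2 * |(z i).re|) * |(m i : ℝ)|)
      = -c * ∑ i, (m i : ℝ) ^ 2 + ∑ i, (2 * |(z i).re|) * |(m i : ℝ)| := by
    rw [Finset.sum_add_distrib, Finset.mul_sum]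
  rw [h3]
  linarith
end

section
/- Let τ be a symmetric g×g complex matrix whose real part is negative definite. Then the Riemann theta function θ_τ(z) = Σ_{m ∈ ℤ^g} exp(4 Q_τ(m) + 2 m·z) is an entire function of z, i.e. it is complex analytic on all of ℂ^g. -/
open scoped BigOperators

/-- The Riemann theta function `θ_τ(z) = Σ_{m ∈ ℤ^g} exp(4 Q_τ(m) + 2 m·z)`. -/
noncomputable def riemannTheta {g : ℕ} (τ : Matrix (Fin g) (Fin g) ℂ)
    (z : Fin g → ℂ) : ℂ :=
  ∑' m : Fin g → ℤ,
    Complex.exp (4 * thetaQ τ (fun i => (m i : ℂ)) + 2 * ∑ i, (m i : ℂ) * z i)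


lemma summable_exp_neg_abs_int : Summable fun n : ℤ => Real.exp (-|(n : ℝ)|) := by
  apply Summable.of_nat_of_neg_add_one
  · simpa using Real.summable_exp_neg_nat
  · apply Real.summable_exp_neg_nat.of_nonneg_of_le (fun n => (Real.exp_pos _).le)
    intro n
    have : |((-((n : ℤ) + 1) : ℤ) : ℝ)| = (n : ℝ) + 1 := by
      push_cast
      rw [abs_neg, abs_of_nonneg]; positivity
    rw [this]
    apply Real.exp_le_exp.2
    linarith

lemma summable_prod_exp (g : ℕ) :
    Summable fun m : Fin g → ℤ => ∏ i, Real.exp (-|((m i : ℤ) : ℝ)|) := by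
  induction g with
  | zero =>
    haveI : Finite (Fin 0 → ℤ) := Finite.of_subsingleton
    exact Summable.of_finite
  | succ g ih =>
    have h1 : (0 : ℤ → ℝ) ≤ fun n : ℤ => Real.exp (-|(n : ℝ)|) := by
      intro n; exact (Real.exp_pos _).le
    have h2 : (0 : (Fin g → ℤ) → ℝ) ≤ fun m : Fin g → ℤ => ∏ i, Real.exp (-|((m i : ℤ) : ℝ)|) := by
      intro m; exact Finset.prod_nonneg fun _ _ => (Real.exp_pos _).le
    have hprod := Summable.mul_of_nonneg summable_exp_neg_abs_int ih h1 h2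
    refine ((Equiv.summable_iff (Fin.consEquiv fun _ => ℤ).symm).mpr hprod).congr ?_
    intro m
    simp [Fin.consEquiv, Fin.prod_univ_succ, Fin.tail]

lemma quad_bound {g : ℕ} (τ : Matrix (Fin g) (Fin g) ℂ) (hneg : ReNegDef τ) :
    ∃ c > (0:ℝ), ∀ x : Fin g → ℝ,
      ∑ i, ∑ j, (τ i j).re * x i * x j ≤ -c * (∑ i, |x i|) ^ 2 := by
  rcases Nat.eq_zero_or_pos g with h0 | hg
  · subst h0
    exact ⟨1, one_pos, fun x => by simp⟩
  set f : (Fin g → ℝ) → ℝ := fun x => ∑ i, ∑ j, (τ i j).re * x i * x j with hf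
  have hfc : Continuous f := by
    apply continuous_finset_sum; intro i _
    apply continuous_finset_sum; intro j _
    exact (continuous_const.mul (continuous_apply i)).mul (continuous_apply j)
  have habs : Continuous fun x : Fin g → ℝ => ∑ i, |x i| := by
    apply continuous_finset_sum; intro i _
    exact (continuous_apply i).abs
  set S : Set (Fin g → ℝ) := {x | ∑ i, |x i| = 1} with hS
  have hScompact : IsCompact S := by
    rw [Metric.isCompact_iff_isClosed_bounded]
    constructor
    · exact isClosed_eq habs continuous_const
    · apply (Metric.isBounded_closedBall (x := (0 : Fin g → ℝ)) (r := 1)).subset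
      intro x hx
      simp only [Metric.mem_closedBall, dist_zero_right]
      rw [pi_norm_le_iff_of_nonneg zero_le_one]
      intro i
      calc ‖x i‖ = |x i| := rfl
        _ ≤ ∑ j, |x j| := Finset.single_le_sum (fun j _ => abs_nonneg (x j)) (Finset.mem_univ i)
        _ = 1 := hx
  have hSne : S.Nonempty := by
    refine ⟨fun _ => 1 / g, ?_⟩
    have hg' : (0:ℝ) < g := by exact_mod_cast hg
    simp only [hS, Set.mem_setOf_eq]
    rw [Finset.sum_const, Finset.card_univ, Fintype.card_fin]
    rw [abs_of_nonneg (by positivity)]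
    rw [nsmul_eq_mul]; field_simp
  obtain ⟨x0, hx0S, hx0max⟩ := hScompact.exists_isMaxOn hSne hfc.continuousOn
  have hx0ne : x0 ≠ 0 := by
    intro h
    rw [hS] at hx0S
    simp only [Set.mem_setOf_eq, h] at hx0S
    simp at hx0S
  have hx0neg : f x0 < 0 := hneg x0 hx0ne
  refine ⟨-f x0, by linarith, fun x => ?_⟩
  by_cases hx : x = 0
  · subst hx; simp [f]
  have hex : ∃ i, x i ≠ 0 := Function.ne_iff.mp hx
  set t : ℝ := ∑ i, |x i| with ht
  have ht0 : 0 < t := by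
    obtain ⟨i, hi⟩ := hex
    apply Finset.sum_pos' (fun j _ => abs_nonneg (x j))
    exact ⟨i, Finset.mem_univ i, abs_pos.mpr hi⟩
  have hmem : (t⁻¹ • x) ∈ S := by
    simp only [hS, Set.mem_setOf_eq, Pi.smul_apply, smul_eq_mul, abs_mul,
      abs_inv, abs_of_pos ht0]
    rw [← Finset.mul_sum, ← ht, inv_mul_cancel₀ ht0.ne']
  have hle : f (t⁻¹ • x) ≤ f x0 := hx0max hmem
  have hscale : f (t⁻¹ • x) = t⁻¹ ^ 2 * f x := by
    simp only [hf, Pi.smul_apply, smul_eq_mul, Finset.mul_sum]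
    apply Finset.sum_congr rfl; intro i _
    apply Finset.sum_congr rfl; intro j _
    ring
  rw [hscale] at hle
  have h2 : f x ≤ t ^ 2 * f x0 := by
    have := mul_le_mul_of_nonneg_left hle (by positivity : (0:ℝ) ≤ t ^ 2)
    calc f x = t ^ 2 * (t⁻¹ ^ 2 * f x) := by
            field_simp
      _ ≤ t ^ 2 * f x0 := this
  calc f x ≤ t ^ 2 * f x0 := h2
    _ = -(-f x0) * t ^ 2 := by ring

lemma master_summable {g : ℕ} {c : ℝ} (hc : 0 < c) (B : ℝ) :
    Summable fun m : Fin g → ℤ =>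
      Real.exp (-c * (∑ i, |((m i : ℤ) : ℝ)|) ^ 2 + B * ∑ i, |((m i : ℤ) : ℝ)|) := by
  set D : ℝ := (B + 1) ^ 2 / (4 * c) with hD
  have hsum : Summable fun m : Fin g → ℤ =>
      Real.exp D * ∏ i, Real.exp (-|((m i : ℤ) : ℝ)|) := (summable_prod_exp g).mul_left _
  refine Summable.of_nonneg_of_le (fun m => (Real.exp_pos _).le) (fun m => ?_) hsum
  set t : ℝ := ∑ i, |((m i : ℤ) : ℝ)| with htdef
  have hprod : ∏ i, Real.exp (-|((m i : ℤ) : ℝ)|) = Real.exp (-t) := by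
    rw [← Real.exp_sum, htdef, ← Finset.sum_neg_distrib]
  rw [hprod, ← Real.exp_add]
  apply Real.exp_le_exp.2
  have key : 0 ≤ c * t ^ 2 - (B + 1) * t + D := by
    have h4c : (0:ℝ) < 4 * c := by linarith
    have : c * t ^ 2 - (B + 1) * t + D = (2 * c * t - (B + 1)) ^ 2 / (4 * c) := by
      rw [hD]; field_simp
      ring
    rw [this]
    positivity
  nlinarith

lemma pow_div_fact_le_exp (x : ℝ) (hx : 0 ≤ x) (n : ℕ) :
    ((n.factorial : ℝ))⁻¹ * x ^ n ≤ Real.exp x := by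
  have hexp : Real.exp x = ∑' k, x ^ k / (k.factorial : ℝ) := by
    rw [Real.exp_eq_exp_ℝ, NormedSpace.exp_eq_tsum_div]
  rw [hexp, inv_mul_eq_div]
  exact Summable.le_tsum (Real.summable_pow_div_factorial x) n
    (fun k _ => by positivity)

lemma real_exp_tsum (x : ℝ) : ∑' n : ℕ, x ^ n / (n.factorial : ℝ) = Real.exp x := by
  rw [Real.exp_eq_exp_ℝ, NormedSpace.exp_eq_tsum_div]

set_option maxHeartbeats 1000000 in
theorem stmt3 {g : ℕ} (τ : Matrix (Fin g) (Fin g) ℂ) (hsym : τ.IsSymm)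
    (hneg : ReNegDef τ) :
    AnalyticOnNhd ℂ (riemannTheta τ) Set.univ := by
  intro z0 _
  classical
  obtain ⟨c, hc, hquad⟩ := quad_bound τ hneg
  set s : (Fin g → ℤ) → ℝ := fun m => ∑ i, |((m i : ℤ) : ℝ)| with hs
  have hs0 : ∀ m, 0 ≤ s m := fun m => Finset.sum_nonneg fun i _ => abs_nonneg _
  have habs_le : ∀ (m : Fin g → ℤ) i, |((m i : ℤ) : ℝ)| ≤ s m := by
    intro m i
    simp only [hs]
    exact Finset.single_le_sum (fun j _ => abs_nonneg (((m j : ℤ) : ℝ))) (Finset.mem_univ i)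
  set a : (Fin g → ℤ) → ℂ := fun m =>
    Complex.exp (4 * thetaQ τ (fun i => (m i : ℂ)) + 2 * ∑ i, (m i : ℂ) * z0 i) with ha
  set B : ℝ := 2 * ∑ i, |(z0 i).re| with hB
  -- norm bound on coefficients
  have hanorm : ∀ m, ‖a m‖ ≤ Real.exp (-c * s m ^ 2 + B * s m) := by
    intro m
    rw [ha]
    simp only [Complex.norm_exp]
    apply Real.exp_le_exp.2
    have h4 : 4 * thetaQ τ (fun i => ((m i : ℤ) : ℂ)) = ∑ i, ∑ j, τ i j * (m i : ℂ) * (m j : ℂ) := by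
      simp only [thetaQ]; ring
    have hre : (4 * thetaQ τ (fun i => ((m i : ℤ) : ℂ)) + 2 * ∑ i, (m i : ℂ) * z0 i).re
        = (∑ i, ∑ j, (τ i j).re * ((m i : ℤ) : ℝ) * ((m j : ℤ) : ℝ))
          + 2 * ∑ i, ((m i : ℤ) : ℝ) * (z0 i).re := by
      rw [Complex.add_re, h4]
      congr 1
      · rw [Complex.re_sum]
        refine Finset.sum_congr rfl fun i _ => ?_
        rw [Complex.re_sum]
        refine Finset.sum_congr rfl fun j _ => ?_
        simp [Complex.mul_re]
      · simp [Complex.mul_re, Complex.re_sum, Finset.mul_sum]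
    rw [hre]
    have h1 : ∑ i, ∑ j, (τ i j).re * ((m i : ℤ) : ℝ) * ((m j : ℤ) : ℝ) ≤ -c * s m ^ 2 :=
      hquad _
    have h2 : 2 * ∑ i, ((m i : ℤ) : ℝ) * (z0 i).re ≤ B * s m := by
      have hstep : ∑ i, ((m i : ℤ) : ℝ) * (z0 i).re ≤ ∑ i, |(z0 i).re| * s m := by
        refine Finset.sum_le_sum fun i _ => ?_
        calc ((m i : ℤ) : ℝ) * (z0 i).re ≤ |((m i : ℤ) : ℝ) * (z0 i).re| := le_abs_self _
          _ = |((m i : ℤ) : ℝ)| * |(z0 i).re| := abs_mul _ _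
          _ ≤ |(z0 i).re| * s m := by
              rw [mul_comm]
              exact mul_le_mul_of_nonneg_left (habs_le m i) (abs_nonneg _)
      rw [← Finset.sum_mul] at hstep
      rw [hB]
      nlinarith [hstep]
    linarith
  -- the linear maps
  set L : (Fin g → ℤ) → ((Fin g → ℂ) →L[ℂ] ℂ) := fun m =>
    ∑ i, ((2 : ℂ) * (m i : ℂ)) • ContinuousLinearMap.proj i with hL
  have hLapply : ∀ m (w : Fin g → ℂ), L m w = 2 * ∑ i, (m i : ℂ) * w i := by
    intro m w
    rw [hL]
    simp only [ContinuousLinearMap.coe_sum', Finset.sum_apply,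
      ContinuousLinearMap.coe_smul', Pi.smul_apply, ContinuousLinearMap.proj_apply,
      smul_eq_mul, Finset.mul_sum]
    exact Finset.sum_congr rfl fun i _ => by ring
  have hLwbound : ∀ m (w : Fin g → ℂ), ‖L m w‖ ≤ 2 * s m * ‖w‖ := by
    intro m w
    rw [hLapply]
    calc ‖(2 : ℂ) * ∑ i, (m i : ℂ) * w i‖ = 2 * ‖∑ i, (m i : ℂ) * w i‖ := by
          rw [norm_mul]; norm_num
      _ ≤ 2 * ∑ i, ‖(m i : ℂ) * w i‖ := by
          have := norm_sum_le Finset.univ (fun i => (m i : ℂ) * w i)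
          linarith
      _ ≤ 2 * ∑ i, |((m i : ℤ) : ℝ)| * ‖w‖ := by
          have hstep : ∑ i, ‖(m i : ℂ) * w i‖ ≤ ∑ i, |((m i : ℤ) : ℝ)| * ‖w‖ := by
            refine Finset.sum_le_sum fun i _ => ?_
            rw [norm_mul]
            have h1 : ‖((m i : ℤ) : ℂ)‖ = |((m i : ℤ) : ℝ)| := by
              simp
            rw [h1]
            exact mul_le_mul_of_nonneg_left (norm_le_pi_norm w i) (abs_nonneg _)
          linarith
      _ = 2 * s m * ‖w‖ := by rw [← Finset.sum_mul]; ring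
  have hLnorm : ∀ m, ‖L m‖ ≤ 2 * s m := by
    intro m
    exact ContinuousLinearMap.opNorm_le_bound _ (by positivity) fun w => hLwbound m w
  -- multilinear terms
  set T : ∀ (_ : Fin g → ℤ) (n : ℕ), ContinuousMultilinearMap ℂ (fun _ : Fin n => (Fin g → ℂ)) ℂ :=
    fun m n => ((n.factorial : ℂ))⁻¹ •
      (ContinuousMultilinearMap.mkPiAlgebraFin ℂ n ℂ).compContinuousLinearMap (fun _ => L m)
    with hT
  have hTapply : ∀ m n (w : Fin g → ℂ),
      T m n (fun _ => w) = ((n.factorial : ℂ))⁻¹ * (L m w) ^ n := by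
    intro m n w
    rw [hT]
    simp [ContinuousMultilinearMap.smul_apply,
      ContinuousMultilinearMap.compContinuousLinearMap_apply,
      ContinuousMultilinearMap.mkPiAlgebraFin_apply, List.ofFn_const, List.prod_replicate,
      smul_eq_mul]
  have hTnorm : ∀ m n, ‖T m n‖ ≤ ((n.factorial : ℝ))⁻¹ * (2 * s m) ^ n := by
    intro m n
    have h1 : ‖((n.factorial : ℂ))⁻¹‖ = ((n.factorial : ℝ))⁻¹ := by
      rw [norm_inv, Complex.norm_natCast]
    have hsm : ‖T m n‖ = ((n.factorial : ℝ))⁻¹ *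
        ‖(ContinuousMultilinearMap.mkPiAlgebraFin ℂ n ℂ).compContinuousLinearMap
          fun _ => L m‖ := by
      simp only [hT]
      rw [← h1]
      exact norm_smul ((n.factorial : ℂ))⁻¹
        ((ContinuousMultilinearMap.mkPiAlgebraFin ℂ n ℂ).compContinuousLinearMap fun _ => L m)
    rw [hsm]
    have hfnn : (0:ℝ) ≤ ((n.factorial : ℝ))⁻¹ := by positivity
    apply mul_le_mul_of_nonneg_left _ hfnn
    calc ‖(ContinuousMultilinearMap.mkPiAlgebraFin ℂ n ℂ).compContinuousLinearMap fun _ => L m‖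
        ≤ ‖ContinuousMultilinearMap.mkPiAlgebraFin ℂ n ℂ‖ * ∏ _i : Fin n, ‖L m‖ :=
          ContinuousMultilinearMap.norm_compContinuousLinearMap_le _ _
      _ = ‖L m‖ ^ n := by
          rw [ContinuousMultilinearMap.norm_mkPiAlgebraFin, Finset.prod_const, one_mul]
          simp
      _ ≤ (2 * s m) ^ n := pow_le_pow_left₀ (norm_nonneg _) (hLnorm m) n
  -- summability of the coefficient series
  have hbound : ∀ m n, ‖a m • T m n‖ ≤ Real.exp (-c * s m ^ 2 + (B + 2) * s m) := by
    intro m n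
    rw [norm_smul (a m) (T m n)]
    calc ‖a m‖ * ‖T m n‖
        ≤ Real.exp (-c * s m ^ 2 + B * s m) * (((n.factorial : ℝ))⁻¹ * (2 * s m) ^ n) := by
          apply mul_le_mul (hanorm m) (hTnorm m n) (norm_nonneg _) (Real.exp_pos _).le
      _ ≤ Real.exp (-c * s m ^ 2 + B * s m) * Real.exp (2 * s m) := by
          exact mul_le_mul_of_nonneg_left
            (pow_div_fact_le_exp _ (by positivity) n) (Real.exp_pos _).le
      _ = Real.exp (-c * s m ^ 2 + (B + 2) * s m) := by
          rw [← Real.exp_add]; ring_nf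
  have hTs : ∀ n, Summable fun m => a m • T m n := by
    intro n
    apply Summable.of_norm
    exact Summable.of_nonneg_of_le (fun m => norm_nonneg _) (fun m => hbound m n)
      (master_summable hc (B + 2))
  set p : FormalMultilinearSeries ℂ (Fin g → ℂ) ℂ := fun n => ∑' m, a m • T m n with hp
  set C : ℝ := ∑' m : Fin g → ℤ, Real.exp (-c * s m ^ 2 + (B + 2) * s m) with hC
  have hpn : ∀ n, ‖p n‖ ≤ C := by
    intro n
    rw [hp]
    calc ‖∑' m, a m • T m n‖ ≤ ∑' m, ‖a m • T m n‖ := by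
          apply norm_tsum_le_tsum_norm
          exact Summable.of_nonneg_of_le (fun m => norm_nonneg _) (fun m => hbound m n)
            (master_summable hc (B + 2))
      _ ≤ C := by
          apply Summable.tsum_le_tsum (fun m => hbound m n)
          · exact Summable.of_nonneg_of_le (fun m => norm_nonneg _) (fun m => hbound m n)
              (master_summable hc (B + 2))
          · exact master_summable hc (B + 2)
  have hradius : (1 : ENNReal) ≤ p.radius := by
    have := p.le_radius_of_bound C (r := 1) fun n => by
      simpa using hpn n
    simpa using this
  refine ⟨p, 1, hradius, one_pos, ?_⟩
  intro w _
  set W : ℝ := ‖w‖ with hW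
  have hW0 : 0 ≤ W := norm_nonneg _
  set F : (Fin g → ℤ) × ℕ → ℂ :=
    fun q => a q.1 * (((q.2.factorial : ℂ))⁻¹ * (L q.1 w) ^ q.2) with hF
  -- summability of F
  have hFle : ∀ q : (Fin g → ℤ) × ℕ,
      ‖F q‖ ≤ ‖a q.1‖ * ((2 * s q.1 * W) ^ q.2 / (q.2.factorial : ℝ)) := by
    rintro ⟨m, n⟩
    show ‖F (m, n)‖ ≤ ‖a m‖ * ((2 * s m * W) ^ n / (n.factorial : ℝ))
    calc ‖F (m, n)‖ = ‖a m‖ * (((n.factorial : ℝ))⁻¹ * ‖L m w‖ ^ n) := by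
          rw [hF]
          simp only [norm_mul, norm_inv, Complex.norm_natCast, norm_pow]
      _ ≤ ‖a m‖ * (((n.factorial : ℝ))⁻¹ * (2 * s m * W) ^ n) := by
          apply mul_le_mul_of_nonneg_left _ (norm_nonneg _)
          apply mul_le_mul_of_nonneg_left _ (by positivity)
          exact pow_le_pow_left₀ (norm_nonneg _) (hLwbound m w) n
      _ = ‖a m‖ * ((2 * s m * W) ^ n / (n.factorial : ℝ)) := by
          rw [div_eq_inv_mul]
  have hGsum : Summable fun q : (Fin g → ℤ) × ℕ =>
      ‖a q.1‖ * ((2 * s q.1 * W) ^ q.2 / (q.2.factorial : ℝ)) := by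
    rw [summable_prod_of_nonneg (fun q => by positivity)]
    constructor
    · intro m
      have := (Real.summable_pow_div_factorial (2 * s m * W)).mul_left ‖a m‖
      simpa using this
    · have heq : ∀ m : Fin g → ℤ,
          ∑' n : ℕ, ‖a m‖ * ((2 * s m * W) ^ n / (n.factorial : ℝ))
            = ‖a m‖ * Real.exp (2 * s m * W) := by
        intro m
        rw [tsum_mul_left, real_exp_tsum]
      refine Summable.congr ?_ (fun m => (heq m).symm)
      apply Summable.of_nonneg_of_le (fun m => by positivity) (fun m => ?_)
        (master_summable hc (B + 2 * W))
      calc ‖a m‖ * Real.exp (2 * s m * W)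
          ≤ Real.exp (-c * s m ^ 2 + B * s m) * Real.exp (2 * s m * W) :=
            mul_le_mul_of_nonneg_right (hanorm m) (Real.exp_pos _).le
        _ = Real.exp (-c * s m ^ 2 + (B + 2 * W) * s m) := by
            rw [← Real.exp_add]; ring_nf
  have hFsummable : Summable F :=
    Summable.of_norm (Summable.of_nonneg_of_le (fun q => norm_nonneg _) hFle hGsum)
  have hfiber : ∀ m, HasSum (fun n => F (m, n)) (a m * Complex.exp (L m w)) := by
    intro m
    have h := NormedSpace.expSeries_hasSum_exp (𝕂 := ℂ) (L m w)
    have hE : NormedSpace.exp (L m w) = Complex.exp (L m w) := by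
      rw [Complex.exp_eq_exp_ℂ]
    rw [hE] at h
    have h2 := h.mul_left (a m)
    have h3 : (fun n => a m * (NormedSpace.expSeries ℂ ℂ n fun _ => L m w))
        = fun n => F (m, n) := by
      funext n
      rw [NormedSpace.expSeries_apply_eq, hF]
      simp [smul_eq_mul]
    rwa [h3] at h2
  have htotal : HasSum (fun m => a m * Complex.exp (L m w)) (∑' q, F q) :=
    HasSum.prod_fiberwise hFsummable.hasSum hfiber
  have hterm : ∀ m : Fin g → ℤ,
      Complex.exp (4 * thetaQ τ (fun i => (m i : ℂ)) + 2 * ∑ i, (m i : ℂ) * (z0 + w) i)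
        = a m * Complex.exp (L m w) := by
    intro m
    rw [ha, ← Complex.exp_add]
    congr 1
    rw [hLapply]
    have hsplit : ∑ i, (m i : ℂ) * (z0 + w) i
        = ∑ i, (m i : ℂ) * z0 i + ∑ i, (m i : ℂ) * w i := by
      rw [← Finset.sum_add_distrib]
      exact Finset.sum_congr rfl fun i _ => by simp [Pi.add_apply]; ring
    rw [hsplit]; ring
  have htheta : riemannTheta τ (z0 + w) = ∑' q, F q := by
    calc riemannTheta τ (z0 + w) = ∑' m, (a m * Complex.exp (L m w)) := by
          simp only [riemannTheta]
          exact tsum_congr hterm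
      _ = ∑' q, F q := htotal.tsum_eq
  have hFswap : Summable fun q : ℕ × (Fin g → ℤ) => F q.swap := hFsummable.prod_symm
  have hslices : ∀ n : ℕ, HasSum (fun m => F (m, n)) (∑' m, F (m, n)) := fun n =>
    (hFswap.prod_factor n).hasSum
  have htsum_swap : ∑' q : ℕ × (Fin g → ℤ), F q.swap = ∑' q, F q :=
    (Equiv.prodComm ℕ (Fin g → ℤ)).tsum_eq F
  have hN : HasSum (fun n => ∑' m, F (m, n)) (∑' q, F q) := by
    have h := HasSum.prod_fiberwise hFswap.hasSum hslices
    rwa [htsum_swap] at h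
  have hpeval : ∀ n, (p n fun _ => w) = ∑' m, F (m, n) := by
    intro n
    rw [hp]
    rw [ContinuousMultilinearMap.tsum_eval (hTs n)]
    refine tsum_congr fun m => ?_
    rw [ContinuousMultilinearMap.smul_apply, hTapply, hF]
    simp [smul_eq_mul]
  rw [htheta]
  exact (funext hpeval : (fun n => p n fun _ => w) = _) ▸ hN
end
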